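/- arXiv:1308.0985 — 7 statements merged into one kernel-verified Lean document; each statement's English description precedes it below -/
import Mathlib

section
/- Let l > 0 and Φ < (π/l)². Let φ be a classical solution of problem (E-r), and let φ̃ : [0,l] → ℝ be the unique solution of the stationary boundary value problem φ̃″(x) + Φ φ̃(x) = 0 on [0,l] with φ̃(0) = μ̃₀ and φ̃(l) = μ̃₁. Then φ(t,·) converges to φ̃ uniformly on [0,l] as t → ∞, i.e. sup_{x∈[0,l]} |φ(t,x) − φ̃(x)| → 0 as t → ∞. -/
open Real Filter Set
open Topology


/-- Weak parabolic maximum principle on `[T,T'] × [0,l]`. -/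
lemma prf_max_principle (c T T' l : ℝ) (hl : 0 < l) (hTT' : T ≤ T')
    (v vt vx vxx : ℝ → ℝ → ℝ)
    (hcont : ContinuousOn (fun p : ℝ × ℝ => v p.1 p.2) (Icc T T' ×ˢ Icc 0 l))
    (hvt : ∀ s ∈ Ioc T T', ∀ x ∈ Ioo 0 l,
        HasDerivWithinAt (fun r => v r x) (vt s x) (Icc T s) s)
    (hvx : ∀ s ∈ Ioc T T', ∀ x ∈ Ioo 0 l, HasDerivAt (v s) (vx s x) x)
    (hvxx : ∀ s ∈ Ioc T T', ∀ x ∈ Ioo 0 l, HasDerivAt (vx s) (vxx s x) x)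
    (hineq : ∀ s ∈ Ioc T T', ∀ x ∈ Ioo 0 l, vt s x ≤ vxx s x + c * v s x)
    (hbd0 : ∀ x ∈ Icc 0 l, v T x ≤ 0)
    (hbdL : ∀ s ∈ Icc T T', v s 0 ≤ 0) (hbdR : ∀ s ∈ Icc T T', v s l ≤ 0) :
    ∀ s ∈ Icc T T', ∀ x ∈ Icc 0 l, v s x ≤ 0 := by
  by_contra hcon
  push_neg at hcon
  obtain ⟨s₁, hs₁, x₁, hx₁, hpos⟩ := hcon
  set lam : ℝ := c + 1 with hlam
  set u : ℝ × ℝ → ℝ := fun p => Real.exp (-lam * p.1) * v p.1 p.2 with hu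
  have hKc : IsCompact (Icc T T' ×ˢ Icc 0 l) := isCompact_Icc.prod isCompact_Icc
  have hKne : (Icc T T' ×ˢ Icc 0 l).Nonempty :=
    ⟨(T, 0), ⟨⟨le_refl T, hTT'⟩, ⟨le_refl 0, hl.le⟩⟩⟩
  have hucont : ContinuousOn u (Icc T T' ×ˢ Icc 0 l) :=
    (Real.continuous_exp.comp (continuous_const.mul continuous_fst)).continuousOn.mul hcont
  obtain ⟨p₀, hp₀K, hp₀max'⟩ := hKc.exists_isMaxOn hKne hucont
  have hp₀max : ∀ q ∈ Icc T T' ×ˢ Icc 0 l, u q ≤ u p₀ := fun q hq => hp₀max' hq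
  obtain ⟨s₀, x₀⟩ := p₀
  have hs₀ : s₀ ∈ Icc T T' := hp₀K.1
  have hx₀ : x₀ ∈ Icc 0 l := hp₀K.2
  have hupos : 0 < u (s₀, x₀) := by
    refine lt_of_lt_of_le ?_ (hp₀max (s₁, x₁) ⟨hs₁, hx₁⟩)
    exact mul_pos (Real.exp_pos _) hpos
  have hvpos : 0 < v s₀ x₀ := by
    by_contra hc
    push_neg at hc
    have : u (s₀, x₀) ≤ 0 := mul_nonpos_of_nonneg_of_nonpos (Real.exp_pos _).le hc
    linarith
  -- s₀ ≠ T, x₀ ≠ 0, x₀ ≠ l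
  have hs₀T : T < s₀ := by
    rcases lt_or_eq_of_le hs₀.1 with h | h
    · exact h
    · have := hbd0 x₀ hx₀; rw [h] at this; linarith
  have hx₀0 : 0 < x₀ := by
    rcases lt_or_eq_of_le hx₀.1 with h | h
    · exact h
    · have := hbdL s₀ hs₀; rw [← h] at hvpos; linarith
  have hx₀l : x₀ < l := by
    rcases lt_or_eq_of_le hx₀.2 with h | h
    · exact h
    · have := hbdR s₀ hs₀; rw [h] at hvpos; linarith
  have hs₀' : s₀ ∈ Ioc T T' := ⟨hs₀T, hs₀.2⟩
  have hx₀' : x₀ ∈ Ioo 0 l := ⟨hx₀0, hx₀l⟩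
  -- time derivative at max is nonneg
  have hgd : HasDerivWithinAt (fun r => Real.exp (-lam * r) * v r x₀)
      (Real.exp (-lam * s₀) * (-lam) * v s₀ x₀ + Real.exp (-lam * s₀) * vt s₀ x₀)
      (Icc T s₀) s₀ := by
    have he : HasDerivAt (fun r : ℝ => Real.exp (-lam * r)) (Real.exp (-lam * s₀) * (-lam)) s₀ := by
      simpa using ((hasDerivAt_id s₀).const_mul (-lam)).exp
    exact (he.hasDerivWithinAt.mul (hvt s₀ hs₀' x₀ hx₀'))
  have htime : 0 ≤ Real.exp (-lam * s₀) * (-lam) * v s₀ x₀ + Real.exp (-lam * s₀) * vt s₀ x₀ := by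
    have hne : (𝓝[Icc T s₀ \ {s₀}] s₀).NeBot := by
      rw [Icc_sdiff_right]
      have : s₀ ∈ closure (Ico T s₀) := by
        rw [closure_Ico (ne_of_lt hs₀T)]; exact ⟨hs₀T.le, le_refl _⟩
      exact mem_closure_iff_nhdsWithin_neBot.mp this
    have hts := hasDerivWithinAt_iff_tendsto_slope.mp hgd
    refine ge_of_tendsto hts ?_
    filter_upwards [self_mem_nhdsWithin] with r hr
    obtain ⟨hrIcc, hrne⟩ := hr
    have hrlt : r < s₀ := lt_of_le_of_ne hrIcc.2 (by simpa using hrne)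
    have hmax : Real.exp (-lam * r) * v r x₀ ≤ Real.exp (-lam * s₀) * v s₀ x₀ :=
      hp₀max (r, x₀) ⟨⟨hrIcc.1, le_trans hrIcc.2 hs₀.2⟩, hx₀⟩
    have hnum : Real.exp (-lam * r) * v r x₀ - Real.exp (-lam * s₀) * v s₀ x₀ ≤ 0 := by linarith
    have hden : r - s₀ ≤ 0 := by linarith
    rw [slope_def_field]
    exact div_nonneg_iff.mpr (Or.inr ⟨by simpa using hnum, hden⟩)
  have htime' : lam * v s₀ x₀ ≤ vt s₀ x₀ := by
    have hexp : 0 < Real.exp (-lam * s₀) := Real.exp_pos _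
    nlinarith [htime]
  -- space: first derivative zero
  have hmaxx : ∀ x ∈ Icc 0 l, v s₀ x ≤ v s₀ x₀ := by
    intro x hx
    have := hp₀max (s₀, x) ⟨hs₀, hx⟩
    have hexp : 0 < Real.exp (-lam * s₀) := Real.exp_pos _
    simp only [hu] at this
    exact le_of_mul_le_mul_left this hexp
  have hlocmax : IsLocalMax (v s₀) x₀ := by
    filter_upwards [Icc_mem_nhds hx₀0 hx₀l] with x hx
    exact hmaxx x hx
  have hvx0 : vx s₀ x₀ = 0 := hlocmax.hasDerivAt_eq_zero (hvx s₀ hs₀' x₀ hx₀')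
  -- second derivative nonpos
  have hvxx0 : vxx s₀ x₀ ≤ 0 := by
    by_contra hc
    push_neg at hc
    have hts := hasDerivAt_iff_tendsto_slope.mp (hvxx s₀ hs₀' x₀ hx₀')
    have hev : ∀ᶠ x in 𝓝[≠] x₀, 0 < slope (vx s₀) x₀ x :=
      hts.eventually (eventually_gt_nhds hc)
    have hev' : ∀ᶠ x in 𝓝[>] x₀, 0 < slope (vx s₀) x₀ x :=
      hev.filter_mono (nhdsWithin_mono x₀ (fun x hx => ne_of_gt hx))
    rw [eventually_nhdsWithin_iff, Metric.eventually_nhds_iff] at hev'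
    obtain ⟨δ, hδ, hδp⟩ := hev'
    set b : ℝ := min (x₀ + δ / 2) ((x₀ + l) / 2) with hb
    have hbx₀ : x₀ < b := lt_min (by linarith) (by linarith)
    have hbl : b < l := lt_of_le_of_lt (min_le_right _ _) (by linarith)
    have hbI : b ∈ Icc 0 l := ⟨by linarith, hbl.le⟩
    have hIoo : Icc x₀ b ⊆ Ioo 0 l := fun x hx => ⟨lt_of_lt_of_le hx₀0 hx.1, lt_of_le_of_lt hx.2 hbl⟩
    have hvxpos : ∀ x ∈ Ioo x₀ b, 0 < vx s₀ x := by
      intro x hx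
      have hd : dist x x₀ < δ := by
        rw [Real.dist_eq, abs_of_pos (by linarith [hx.1])]
        have : x < x₀ + δ / 2 := lt_of_lt_of_le hx.2 (le_trans (min_le_left _ _) (le_refl _))
        linarith
      have := hδp hd hx.1
      rw [slope_def_field, hvx0, sub_zero] at this
      have hxx : 0 < x - x₀ := by linarith [hx.1]
      have := mul_pos this hxx
      rwa [div_mul_cancel₀] at this
      exact ne_of_gt hxx
    have hmono : StrictMonoOn (v s₀) (Icc x₀ b) := by
      apply strictMonoOn_of_deriv_pos (convex_Icc _ _)
      · intro x hx
        exact ((hvx s₀ hs₀' x (hIoo hx)).differentiableAt).continuousAt.continuousWithinAt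
      · intro x hx
        rw [interior_Icc] at hx
        rw [(hvx s₀ hs₀' x (hIoo ⟨hx.1.le, hx.2.le⟩)).deriv]
        exact hvxpos x hx
    have h1 : v s₀ x₀ < v s₀ b := hmono ⟨le_refl _, hbx₀.le⟩ ⟨hbx₀.le, le_refl _⟩ hbx₀
    have h2 : v s₀ b ≤ v s₀ x₀ := hmaxx b hbI
    linarith
  have := hineq s₀ hs₀' x₀ hx₀'
  nlinarith [hvpos]


set_option maxHeartbeats 1000000 in


/-- For `Φ < (π/l)²`, a classical solution `φ` of the problem
`∂ₜφ = ∂ₓ²φ + Φφ` on `[0,∞) × [0,l]` with `φ(0,·) = φ₀`, `φ(t,0) = μ₀(t)`,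
`φ(t,l) = μ₁(t)` (where `μⱼ(t) → μ̃ⱼ` and `μⱼ'(t) → 0` as `t → ∞`) converges,
uniformly on `[0,l]` as `t → ∞`, to the solution `ψ` of the stationary problem
`ψ'' + Φψ = 0`, `ψ(0) = μ̃₀`, `ψ(l) = μ̃₁`. -/
theorem prf_warped_product_convergence (l Φ : ℝ) (hl : 0 < l) (hΦ : Φ < (π / l) ^ 2)
    (μ0 μ1 : ℝ → ℝ) (tμ0 tμ1 : ℝ)
    (hμ0C1 : ContDiffOn ℝ 1 μ0 (Ici 0)) (hμ1C1 : ContDiffOn ℝ 1 μ1 (Ici 0))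
    (hμ0lim : Tendsto μ0 atTop (nhds tμ0)) (hμ1lim : Tendsto μ1 atTop (nhds tμ1))
    (hμ0'lim : Tendsto (fun t => derivWithin μ0 (Ici 0) t) atTop (nhds 0))
    (hμ1'lim : Tendsto (fun t => derivWithin μ1 (Ici 0) t) atTop (nhds 0))
    (φ0 : ℝ → ℝ) (hφ0 : ContinuousOn φ0 (Icc 0 l))
    (φ : ℝ → ℝ → ℝ)
    (hφcont : ContinuousOn (fun p : ℝ × ℝ => φ p.1 p.2) (Ici 0 ×ˢ Icc 0 l))
    (hφt : ∀ t ∈ Ici (0 : ℝ), ∀ x ∈ Icc 0 l,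
      DifferentiableWithinAt ℝ (fun s => φ s x) (Ici 0) t)
    (hφx1 : ∀ t ∈ Ici (0 : ℝ), ∀ x ∈ Icc 0 l,
      DifferentiableWithinAt ℝ (φ t) (Icc 0 l) x)
    (hφx2 : ∀ t ∈ Ici (0 : ℝ), ∀ x ∈ Icc 0 l,
      DifferentiableWithinAt ℝ (derivWithin (φ t) (Icc 0 l)) (Icc 0 l) x)
    (hφtcont : ContinuousOn
      (fun p : ℝ × ℝ => derivWithin (fun s => φ s p.2) (Ici 0) p.1) (Ici 0 ×ˢ Icc 0 l))
    (hφxcont : ContinuousOn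
      (fun p : ℝ × ℝ => derivWithin (derivWithin (φ p.1) (Icc 0 l)) (Icc 0 l) p.2)
      (Ici 0 ×ˢ Icc 0 l))
    (hPDE : ∀ t ∈ Ici (0 : ℝ), ∀ x ∈ Icc 0 l,
      derivWithin (fun s => φ s x) (Ici 0) t
        = derivWithin (derivWithin (φ t) (Icc 0 l)) (Icc 0 l) x + Φ * φ t x)
    (hinit : ∀ x ∈ Icc 0 l, φ 0 x = φ0 x)
    (hbd0 : ∀ t ∈ Ici (0 : ℝ), φ t 0 = μ0 t)
    (hbdl : ∀ t ∈ Ici (0 : ℝ), φ t l = μ1 t)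
    (ψ : ℝ → ℝ)
    (hψ1 : ∀ x ∈ Icc 0 l, DifferentiableWithinAt ℝ ψ (Icc 0 l) x)
    (hψ2 : ∀ x ∈ Icc 0 l, DifferentiableWithinAt ℝ (derivWithin ψ (Icc 0 l)) (Icc 0 l) x)
    (hψode : ∀ x ∈ Icc 0 l,
      derivWithin (derivWithin ψ (Icc 0 l)) (Icc 0 l) x + Φ * ψ x = 0)
    (hψ0 : ψ 0 = tμ0) (hψl : ψ l = tμ1) :
    TendstoUniformlyOn φ ψ atTop (Icc 0 l) := by
  have hπl : (0:ℝ) < π / l := div_pos Real.pi_pos hl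
  -- choose ω with Φ < ω² < (π/l)², 0 < ω
  set ω : ℝ := Real.sqrt ((max Φ 0 + (π / l) ^ 2) / 2) with hωdef
  have hmax0 : (0:ℝ) ≤ max Φ 0 := le_max_right _ _
  have hmaxΦ : Φ ≤ max Φ 0 := le_max_left _ _
  have hmaxlt : max Φ 0 < (π / l) ^ 2 := max_lt hΦ (by positivity)
  have hargpos : 0 < (max Φ 0 + (π / l) ^ 2) / 2 := by positivity
  have hω2 : ω ^ 2 = (max Φ 0 + (π / l) ^ 2) / 2 := Real.sq_sqrt hargpos.le
  have hΦω : Φ < ω ^ 2 := by rw [hω2]; linarith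
  have hωlt : ω ^ 2 < (π / l) ^ 2 := by rw [hω2]; linarith
  have hω0 : 0 < ω := Real.sqrt_pos.mpr hargpos
  have hωπ : ω < π / l := lt_of_pow_lt_pow_left₀ 2 hπl.le hωlt
  have hωl : ω * l < π := (lt_div_iff₀ hl).mp hωπ
  set δ : ℝ := ω ^ 2 - Φ with hδdef
  have hδ : 0 < δ := by simp only [hδdef]; linarith
  -- the barrier profile H
  set H : ℝ → ℝ := fun x => Real.cos (ω * (x - l / 2)) with hHdef
  set m : ℝ := Real.cos (ω * (l / 2)) with hmdef
  have hm : 0 < m := by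
    apply Real.cos_pos_of_mem_Ioo
    constructor
    · have : 0 < ω * (l / 2) := by positivity
      linarith [Real.pi_pos]
    · nlinarith
  have hHd1 : ∀ x : ℝ, HasDerivAt H (-(ω * Real.sin (ω * (x - l / 2)))) x := by
    intro x
    have h1 : HasDerivAt (fun y : ℝ => ω * (y - l / 2)) ω x := by
      simpa using ((hasDerivAt_id x).sub_const (l / 2)).const_mul ω
    have h2 := h1.cos
    convert h2 using 1
    ring
  have hHd2 : ∀ x : ℝ, HasDerivAt (fun y => -(ω * Real.sin (ω * (y - l / 2))))
      (-(ω ^ 2) * H x) x := by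
    intro x
    have h1 : HasDerivAt (fun y : ℝ => ω * (y - l / 2)) ω x := by
      simpa using ((hasDerivAt_id x).sub_const (l / 2)).const_mul ω
    have h2 := (h1.sin).const_mul (-ω)
    have : HasDerivAt (fun y => -ω * Real.sin (ω * (y - l / 2)))
        (-ω * (Real.cos (ω * (x - l / 2)) * ω)) x := h2
    convert this using 1
    · funext y; ring
    · simp only [hHdef]; ring
  have hmH : ∀ x ∈ Icc 0 l, m ≤ H x := by
    intro x hx
    have habs : |ω * (x - l / 2)| ≤ ω * (l / 2) := by
      rw [abs_mul, abs_of_pos hω0]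
      refine mul_le_mul_of_nonneg_left ?_ hω0.le
      rw [abs_le]
      exact ⟨by linarith [hx.1], by linarith [hx.2]⟩
    have hc : Real.cos (ω * (l / 2)) ≤ Real.cos |ω * (x - l / 2)| :=
      Real.cos_le_cos_of_nonneg_of_le_pi (abs_nonneg _) (by nlinarith [Real.pi_pos]) habs
    rw [Real.cos_abs] at hc
    exact hc
  have hH1 : ∀ x : ℝ, H x ≤ 1 := fun x => Real.cos_le_one _
  have hH0 : ∀ x ∈ Icc 0 l, 0 ≤ H x := fun x hx => le_trans hm.le (hmH x hx)
  -- ψ facts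
  have hψcont : ContinuousOn ψ (Icc 0 l) := fun x hx => (hψ1 x hx).continuousWithinAt
  have hψd1 : ∀ x ∈ Ioo 0 l, HasDerivAt ψ (derivWithin ψ (Icc 0 l) x) x := by
    intro x hx
    have hnh : Icc 0 l ∈ 𝓝 x := Icc_mem_nhds hx.1 hx.2
    have hd := (hψ1 x (Ioo_subset_Icc_self hx)).differentiableAt hnh
    rw [derivWithin_of_mem_nhds hnh]
    exact hd.hasDerivAt
  have hψd2 : ∀ x ∈ Ioo 0 l, HasDerivAt (derivWithin ψ (Icc 0 l)) (-(Φ * ψ x)) x := by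
    intro x hx
    have hnh : Icc 0 l ∈ 𝓝 x := Icc_mem_nhds hx.1 hx.2
    have hd := (hψ2 x (Ioo_subset_Icc_self hx)).differentiableAt hnh
    have hval : deriv (derivWithin ψ (Icc 0 l)) x = -(Φ * ψ x) := by
      rw [← derivWithin_of_mem_nhds hnh]
      have := hψode x (Ioo_subset_Icc_self hx)
      linarith
    rw [← hval]
    exact hd.hasDerivAt
  -- φ facts
  have hφd1 : ∀ t ∈ Ici (0:ℝ), ∀ x ∈ Ioo 0 l,
      HasDerivAt (φ t) (derivWithin (φ t) (Icc 0 l) x) x := by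
    intro t ht x hx
    have hnh : Icc 0 l ∈ 𝓝 x := Icc_mem_nhds hx.1 hx.2
    have hd := (hφx1 t ht x (Ioo_subset_Icc_self hx)).differentiableAt hnh
    rw [derivWithin_of_mem_nhds hnh]
    exact hd.hasDerivAt
  have hφd2 : ∀ t ∈ Ici (0:ℝ), ∀ x ∈ Ioo 0 l,
      HasDerivAt (derivWithin (φ t) (Icc 0 l))
        (derivWithin (derivWithin (φ t) (Icc 0 l)) (Icc 0 l) x) x := by
    intro t ht x hx
    have hnh : Icc 0 l ∈ 𝓝 x := Icc_mem_nhds hx.1 hx.2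
    have hd := (hφx2 t ht x (Ioo_subset_Icc_self hx)).differentiableAt hnh
    rw [derivWithin_of_mem_nhds hnh]
    exact hd.hasDerivAt
  -- the main estimate
  rw [Metric.tendstoUniformlyOn_iff]
  intro ε hε
  have hA : (0:ℝ) < m * ε / 4 := by positivity
  obtain ⟨T₀, hT₀⟩ := (Metric.tendsto_atTop.mp hμ0lim) (m * ε / 4) hA
  obtain ⟨T₁, hT₁⟩ := (Metric.tendsto_atTop.mp hμ1lim) (m * ε / 4) hA
  set T : ℝ := max 0 (max T₀ T₁) with hTdef
  have hT0 : (0:ℝ) ≤ T := le_max_left _ _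
  have hTT₀ : T₀ ≤ T := le_trans (le_max_left _ _) (le_max_right _ _)
  have hTT₁ : T₁ ≤ T := le_trans (le_max_right _ _) (le_max_right _ _)
  -- bound at time T
  have hφTc : ContinuousOn (fun x => φ T x - ψ x) (Icc 0 l) := by
    refine ContinuousOn.sub ?_ hψcont
    exact hφcont.comp ((continuous_const.prodMk continuous_id).continuousOn)
      (fun x hx => ⟨hT0, hx⟩)
  obtain ⟨M₀, hM₀⟩ := isCompact_Icc.exists_bound_of_continuousOn hφTc
  set M : ℝ := max M₀ 0 with hMdef
  have hM : ∀ x ∈ Icc 0 l, |φ T x - ψ x| ≤ M := by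
    intro x hx
    exact le_trans (hM₀ x hx) (le_max_left _ _)
  have hM0 : 0 ≤ M := le_max_right _ _
  set B : ℝ := M / m with hBdef
  have hB0 : 0 ≤ B := div_nonneg hM0 hm.le
  have hBm : B * m = M := div_mul_cancel₀ M (ne_of_gt hm)
  set A : ℝ := ε / 4 with hAdef
  have hA0 : 0 < A := by positivity
  -- tail of the barrier
  have htail : Tendsto (fun s => B * Real.exp (-δ * (s - T))) atTop (𝓝 0) := by
    have h1 : Tendsto (fun s : ℝ => -δ * (s - T)) atTop atBot := by
      rw [tendsto_const_mul_atBot_of_neg (by linarith : -δ < 0)]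
      simpa [sub_eq_add_neg] using tendsto_atTop_add_const_right atTop (-T) tendsto_id
    have h2 : Tendsto (fun s => Real.exp (-δ * (s - T))) atTop (𝓝 0) :=
      Real.tendsto_exp_atBot.comp h1
    simpa using h2.const_mul B
  obtain ⟨T₂, hT₂⟩ := (Metric.tendsto_atTop.mp htail) (ε / 4) (by positivity)
  filter_upwards [eventually_ge_atTop (max T T₂)] with s hs x hx
  have hsT : T ≤ s := le_trans (le_max_left _ _) hs
  have hsT₂ : T₂ ≤ s := le_trans (le_max_right _ _) hs
  -- the key barrier estimate via the maximum principle
  have key : ∀ σ : ℝ, σ = 1 ∨ σ = -1 →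
      σ * (φ s x - ψ x) ≤ (A + B * Real.exp (-δ * (s - T))) * H x := by
    intro σ hσ
    have hσabs : ∀ a : ℝ, σ * a ≤ |a| := by
      intro a; rcases hσ with h | h <;> rw [h]
      · simpa using le_abs_self a
      · simpa using neg_le_abs a
    have hmain := prf_max_principle Φ T s l hl hsT
      (fun r y => σ * (φ r y - ψ y) - (A + B * Real.exp (-δ * (r - T))) * H y)
      (fun r y => σ * derivWithin (fun s' => φ s' y) (Ici 0) r
        - B * (Real.exp (-δ * (r - T)) * (-δ)) * H y)
      (fun r y => σ * (derivWithin (φ r) (Icc 0 l) y - derivWithin ψ (Icc 0 l) y)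
        - (A + B * Real.exp (-δ * (r - T))) * (-(ω * Real.sin (ω * (y - l / 2)))))
      (fun r y => σ * (derivWithin (derivWithin (φ r) (Icc 0 l)) (Icc 0 l) y - (-(Φ * ψ y)))
        - (A + B * Real.exp (-δ * (r - T))) * (-(ω ^ 2) * H y))
      ?_ ?_ ?_ ?_ ?_ ?_ ?_ ?_
    · have hfin : σ * (φ s x - ψ x) - (A + B * Real.exp (-δ * (s - T))) * H x ≤ 0 :=
        hmain s ⟨hsT, le_refl s⟩ x hx
      linarith
    · -- continuity
      have hsub : Icc T s ×ˢ Icc 0 l ⊆ Ici 0 ×ˢ Icc 0 l := by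
        intro p hp
        exact ⟨le_trans hT0 hp.1.1, hp.2⟩
      have hzc : Continuous (fun p : ℝ × ℝ => (A + B * Real.exp (-δ * (p.1 - T))) * H p.2) := by
        refine Continuous.mul ?_ ?_
        · exact continuous_const.add (continuous_const.mul
            (Real.continuous_exp.comp (continuous_const.mul (continuous_fst.sub continuous_const))))
        · simp only [hHdef]
          exact Real.continuous_cos.comp (continuous_const.mul (continuous_snd.sub continuous_const))
      exact (continuousOn_const.mul ((hφcont.mono hsub).sub
        (hψcont.comp continuous_snd.continuousOn fun p hp => hp.2))).sub hzc.continuousOn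
    · -- time derivative
      intro r hr y hy
      have hr0 : r ∈ Ici (0:ℝ) := le_trans hT0 hr.1.le
      have hyI : y ∈ Icc 0 l := Ioo_subset_Icc_self hy
      have hIcc : Icc T r ⊆ Ici (0:ℝ) := fun z hz => le_trans hT0 hz.1
      have h1 : HasDerivWithinAt (fun r' => σ * (φ r' y - ψ y))
          (σ * derivWithin (fun s' => φ s' y) (Ici 0) r) (Icc T r) r :=
        (((hφt r hr0 y hyI).hasDerivWithinAt.mono hIcc).sub_const (ψ y)).const_mul σ
      have h2 : HasDerivAt (fun r' => (A + B * Real.exp (-δ * (r' - T))) * H y)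
          (B * (Real.exp (-δ * (r - T)) * (-δ)) * H y) r := by
        have ha : HasDerivAt (fun r' : ℝ => -δ * (r' - T)) (-δ) r := by
          simpa using ((hasDerivAt_id r).sub_const T).const_mul (-δ)
        exact ((ha.exp.const_mul B).const_add A).mul_const (H y)
      exact h1.sub h2.hasDerivWithinAt
    · -- first space derivative
      intro r hr y hy
      have hr0 : r ∈ Ici (0:ℝ) := le_trans hT0 hr.1.le
      have h1 := ((hφd1 r hr0 y hy).sub (hψd1 y hy)).const_mul σ
      have h2 := (hHd1 y).const_mul (A + B * Real.exp (-δ * (r - T)))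
      exact h1.sub h2
    · -- second space derivative
      intro r hr y hy
      have hr0 : r ∈ Ici (0:ℝ) := le_trans hT0 hr.1.le
      have h1 := ((hφd2 r hr0 y hy).sub (hψd2 y hy)).const_mul σ
      have h2 := (hHd2 y).const_mul (A + B * Real.exp (-δ * (r - T)))
      exact h1.sub h2
    · -- differential inequality
      intro r hr y hy
      have hr0 : r ∈ Ici (0:ℝ) := le_trans hT0 hr.1.le
      have hyI : y ∈ Icc 0 l := Ioo_subset_Icc_self hy
      have hpde := hPDE r hr0 y hyI
      beta_reduce
      rw [hpde]
      have hHy : 0 ≤ H y := hH0 y hyI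
      have hexp : 0 < Real.exp (-δ * (r - T)) := Real.exp_pos _
      nlinarith [mul_nonneg (mul_nonneg hδ.le hA0.le) hHy,
        mul_nonneg (mul_nonneg hδ.le (mul_nonneg hB0 hexp.le)) hHy]
    · -- initial bound
      intro y hy
      have he1 : Real.exp (-δ * (T - T)) = 1 := by simp
      beta_reduce
      rw [he1]
      have h1 : σ * (φ T y - ψ y) ≤ M := le_trans (hσabs _) (hM y hy)
      have h2 : (A + B) * m ≤ (A + B) * H y :=
        mul_le_mul_of_nonneg_left (hmH y hy) (by linarith)
      nlinarith
    · -- left boundary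
      intro r hr
      have hr0 : r ∈ Ici (0:ℝ) := le_trans hT0 hr.1
      have h0I : (0:ℝ) ∈ Icc 0 l := ⟨le_refl _, hl.le⟩
      beta_reduce
      rw [hbd0 r hr0, hψ0]
      have hd : |μ0 r - tμ0| < m * ε / 4 := by
        have := hT₀ r (le_trans hTT₀ hr.1)
        rwa [Real.dist_eq] at this
      have h1 : σ * (μ0 r - tμ0) ≤ |μ0 r - tμ0| := hσabs _
      have hexp : 0 < Real.exp (-δ * (r - T)) := Real.exp_pos _
      have h2 : A * m ≤ (A + B * Real.exp (-δ * (r - T))) * H 0 := by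
        have := hmH 0 h0I
        nlinarith [mul_nonneg hB0 hexp.le]
      have hAm : A * m = m * ε / 4 := by rw [hAdef]; ring
      linarith
    · -- right boundary
      intro r hr
      have hr0 : r ∈ Ici (0:ℝ) := le_trans hT0 hr.1
      have hlI : l ∈ Icc 0 l := ⟨hl.le, le_refl _⟩
      beta_reduce
      rw [hbdl r hr0, hψl]
      have hd : |μ1 r - tμ1| < m * ε / 4 := by
        have := hT₁ r (le_trans hTT₁ hr.1)
        rwa [Real.dist_eq] at this
      have h1 : σ * (μ1 r - tμ1) ≤ |μ1 r - tμ1| := hσabs _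
      have hexp : 0 < Real.exp (-δ * (r - T)) := Real.exp_pos _
      have h2 : A * m ≤ (A + B * Real.exp (-δ * (r - T))) * H l := by
        have := hmH l hlI
        nlinarith [mul_nonneg hB0 hexp.le]
      have hAm : A * m = m * ε / 4 := by rw [hAdef]; ring
      linarith
  -- conclude
  have h1 := key 1 (Or.inl rfl)
  have h2 := key (-1) (Or.inr rfl)
  have habs : |φ s x - ψ x| ≤ (A + B * Real.exp (-δ * (s - T))) * H x := by
    rw [abs_le]; constructor <;> nlinarith
  have hcoeff : 0 ≤ A + B * Real.exp (-δ * (s - T)) := by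
    have := Real.exp_pos (-δ * (s - T))
    nlinarith
  have hBe : B * Real.exp (-δ * (s - T)) < ε / 4 := by
    have := hT₂ s hsT₂
    rw [Real.dist_eq, sub_zero] at this
    calc B * Real.exp (-δ * (s - T)) ≤ |B * Real.exp (-δ * (s - T))| := le_abs_self _
      _ < ε / 4 := this
  have hfin : |φ s x - ψ x| < ε := by
    have h3 : (A + B * Real.exp (-δ * (s - T))) * H x ≤ A + B * Real.exp (-δ * (s - T)) :=
      mul_le_of_le_one_right hcoeff (hH1 x)
    have : A = ε / 4 := rfl
    linarith
  rw [Real.dist_eq, abs_sub_comm]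
  exact hfin
end

section
/- Let n ≥ 1, Φ > 0, and let X₀ be a real symmetric n×n matrix such that both X₀ and Φ·I − X₀ are positive definite. Then there exists a unique differentiable map X : ℝ → Matrix(n,n,ℝ) with X(0) = X₀ satisfying the matrix ODE X′(t) = 4 X(t)(X(t) − Φ·I) for all t ∈ ℝ; moreover X(t) is symmetric positive definite with Φ·I − X(t) positive definite for every t, X(t) → 0 as t → ∞, and X(t) → Φ·I as t → −∞. -/
open Filter Matrix Set

attribute [local instance] Matrix.linftyOpNormedAddCommGroup Matrix.linftyOpNormedRing
  Matrix.linftyOpNormedAlgebra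

/-! ### Scalar logistic solutions -/

noncomputable def xsol (Φ c t : ℝ) : ℝ := Φ * c / (c + (Φ - c) * Real.exp (4 * Φ * t))

lemma denom_pos {Φ c : ℝ} (hc : 0 < c) (hcΦ : c < Φ) (t : ℝ) :
    0 < c + (Φ - c) * Real.exp (4 * Φ * t) := by
  have h := sub_pos.mpr hcΦ
  positivity

lemma xsol_pos {Φ c : ℝ} (hc : 0 < c) (hcΦ : c < Φ) (hΦ : 0 < Φ) (t : ℝ) : 0 < xsol Φ c t :=
  div_pos (by positivity) (denom_pos hc hcΦ t)

lemma xsol_lt {Φ c : ℝ} (hc : 0 < c) (hcΦ : c < Φ) (hΦ : 0 < Φ) (t : ℝ) : xsol Φ c t < Φ := by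
  rw [xsol, div_lt_iff₀ (denom_pos hc hcΦ t)]
  have h := Real.exp_pos (4 * Φ * t)
  nlinarith [mul_pos (mul_pos hΦ (sub_pos.2 hcΦ)) h]

lemma xsol_zero {Φ c : ℝ} (hc : 0 < c) (hΦ : 0 < Φ) : xsol Φ c 0 = c := by
  have hΦ' : Φ ≠ 0 := hΦ.ne'
  simp only [xsol, mul_zero, Real.exp_zero, mul_one]
  field_simp
  have hcΦ : c + (Φ - c) = Φ := by ring
  rw [hcΦ, div_self hΦ']

lemma xsol_hasDerivAt {Φ c : ℝ} (hc : 0 < c) (hcΦ : c < Φ) (hΦ : 0 < Φ) (t : ℝ) :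
    HasDerivAt (xsol Φ c) (4 * xsol Φ c t * (xsol Φ c t - Φ)) t := by
  have hD := denom_pos hc hcΦ t
  have hexp : HasDerivAt (fun s => c + (Φ - c) * Real.exp (4 * Φ * s))
      ((Φ - c) * (Real.exp (4 * Φ * t) * (4 * Φ))) t := by
    have : HasDerivAt (fun s => Real.exp (4 * Φ * s)) (Real.exp (4 * Φ * t) * (4 * Φ)) t := by
      have h1 : HasDerivAt (fun s : ℝ => 4 * Φ * s) (4 * Φ) t := by
        simpa using (hasDerivAt_id t).const_mul (4 * Φ)
      exact (Real.hasDerivAt_exp (4 * Φ * t)).comp t h1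
    simpa using (this.const_mul (Φ - c)).const_add c
  have := ((hasDerivAt_const t (Φ * c)).div hexp hD.ne')
  convert this using 1
  · rfl
  · rfl
  · rfl
  unfold xsol
  field_simp
  ring

lemma xsol_tendsto_atTop {Φ c : ℝ} (hc : 0 < c) (hcΦ : c < Φ) (hΦ : 0 < Φ) :
    Tendsto (xsol Φ c) atTop (nhds 0) := by
  apply Tendsto.div_atTop (tendsto_const_nhds (x := Φ * c))
  apply tendsto_atTop_add_const_left
  apply Tendsto.const_mul_atTop (by linarith)
  exact Real.tendsto_exp_atTop.comp (Tendsto.const_mul_atTop (by positivity) tendsto_id)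

lemma xsol_tendsto_atBot {Φ c : ℝ} (hc : 0 < c) (hcΦ : c < Φ) (hΦ : 0 < Φ) :
    Tendsto (xsol Φ c) atBot (nhds Φ) := by
  have h : Tendsto (fun t => c + (Φ - c) * Real.exp (4 * Φ * t)) atBot
      (nhds (c + (Φ - c) * 0)) := by
    apply Tendsto.const_add
    apply Tendsto.const_mul
    exact Real.tendsto_exp_atBot.comp (Tendsto.const_mul_atBot (by positivity) tendsto_id)
  have h2 : Tendsto (fun t => Φ * c / (c + (Φ - c) * Real.exp (4 * Φ * t))) atBot
      (nhds (Φ * c / (c + (Φ - c) * 0))) :=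
    Tendsto.div tendsto_const_nhds h (by simpa using hc.ne')
  have h0 : Φ * c / (c + (Φ - c) * 0) = Φ := by
    rw [mul_zero, add_zero, mul_div_assoc, div_self hc.ne', mul_one]
  rw [h0] at h2
  exact h2

/-! ### Matrix helpers -/

variable {n : ℕ}

lemma conj_entry (U : Matrix (Fin n) (Fin n) ℝ) (d : Fin n → ℝ) (i j : Fin n) :
    (U * diagonal d * star U) i j = ∑ k, U i k * d k * U j k := by
  simp [Matrix.mul_apply, Matrix.diagonal_apply, Finset.sum_ite_eq, star_apply,
    Matrix.conjTranspose_apply, mul_comm]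

lemma posdef_conj {M U : Matrix (Fin n) (Fin n) ℝ} (hM : M.PosDef)
    (hU : star U * U = 1) : (star U * M * U).PosDef := by
  rw [Matrix.posDef_iff_dotProduct_mulVec]
  constructor
  · show (star U * M * U)ᴴ = _
    rw [← Matrix.star_eq_conjTranspose]
    simp only [StarMul.star_mul, star_star]
    rw [Matrix.star_eq_conjTranspose M, hM.1.eq, mul_assoc]
  · intro x hx
    have hUx : U *ᵥ x ≠ 0 := by
      intro h
      apply hx
      have : (star U * U) *ᵥ x = 0 := by rw [← Matrix.mulVec_mulVec, h, Matrix.mulVec_zero]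
      rwa [hU, Matrix.one_mulVec] at this
    have h2 := hM.dotProduct_mulVec_pos hUx
    have key : star x ⬝ᵥ ((star U * M * U) *ᵥ x) = star (U *ᵥ x) ⬝ᵥ (M *ᵥ (U *ᵥ x)) := by
      rw [← Matrix.mulVec_mulVec, ← Matrix.mulVec_mulVec, Matrix.dotProduct_mulVec (star x),
        Matrix.star_mulVec, ← Matrix.star_eq_conjTranspose, Matrix.dotProduct_mulVec]
    rw [key]
    exact h2

lemma hasDerivAt_matrix {Z : ℝ → Matrix (Fin n) (Fin n) ℝ} {D : Matrix (Fin n) (Fin n) ℝ}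
    {t : ℝ} (h : ∀ i j, HasDerivAt (fun s => Z s i j) (D i j) t) :
    HasDerivAt Z D t := by
  have hZ : ∀ s, Z s = ∑ i, ∑ j, (Z s i j) • single i j (1:ℝ) := by
    intro s
    conv_lhs => rw [matrix_eq_sum_single (Z s)]
    simp [smul_single]
  have hD : D = ∑ i, ∑ j, (D i j) • single i j (1:ℝ) := by
    conv_lhs => rw [matrix_eq_sum_single D]
    simp [smul_single]
  rw [funext hZ, hD]
  exact HasDerivAt.fun_sum fun i _ => HasDerivAt.fun_sum fun j _ => (h i j).smul_const _

lemma smul_one_eq_diag (Φ : ℝ) :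
    Φ • (1 : Matrix (Fin n) (Fin n) ℝ) = Matrix.diagonal (fun _ => Φ) := by
  ext i j
  by_cases h : i = j <;> simp [Matrix.diagonal_apply, Matrix.one_apply, h]

lemma conj_mul_conj {U : Matrix (Fin n) (Fin n) ℝ} (hU : star U * U = 1)
    (A B : Matrix (Fin n) (Fin n) ℝ) :
    (U * A * star U) * (U * B * star U) = U * (A * B) * star U := by
  have h : (U * A * star U) * (U * B * star U) = U * A * (star U * U) * B * star U := by
    simp only [mul_assoc]
  rw [h, hU, mul_one]
  simp only [mul_assoc]

lemma conj_sub (U A B : Matrix (Fin n) (Fin n) ℝ) :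
    U * (A - B) * star U = U * A * star U - U * B * star U := by
  rw [mul_sub, sub_mul]

lemma conj_conj {U : Matrix (Fin n) (Fin n) ℝ} (hU : star U * U = 1)
    (A : Matrix (Fin n) (Fin n) ℝ) :
    star U * (U * A * star U) * U = A := by
  have h : star U * (U * A * star U) * U = (star U * U) * A * (star U * U) := by
    simp only [mul_assoc]
  rw [h, hU, one_mul, mul_one]

noncomputable def Fq (Φ : ℝ) (X : Matrix (Fin n) (Fin n) ℝ) : Matrix (Fin n) (Fin n) ℝ :=
  (4:ℝ) • (X * (X - Φ • (1 : Matrix (Fin n) (Fin n) ℝ)))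

lemma Fq_lipschitz (Φ : ℝ) (hΦ : 0 < Φ) (R : ℝ) (hR : 0 ≤ R) :
    LipschitzOnWith (Real.toNNReal (8*R + 4*Φ)) (Fq (n := n) Φ)
      (Metric.closedBall (0 : Matrix (Fin n) (Fin n) ℝ) R) := by
  apply LipschitzOnWith.of_dist_le'
  intro A hA B hB
  rw [Metric.mem_closedBall, dist_zero_right] at hA hB
  rw [dist_eq_norm, dist_eq_norm]
  have key : Fq Φ A - Fq Φ B
      = (4:ℝ) • (A * (A - B) + (A - B) * B) - (4*Φ) • (A - B) := by
    simp only [Fq, mul_sub, sub_mul, smul_sub, mul_smul_comm, mul_one, smul_smul]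
    module
  rw [key]
  have h1 : ‖A * (A - B) + (A - B) * B‖ ≤ (‖A‖ + ‖B‖) * ‖A - B‖ := by
    calc ‖A * (A - B) + (A - B) * B‖ ≤ ‖A * (A - B)‖ + ‖(A - B) * B‖ := norm_add_le _ _
    _ ≤ ‖A‖ * ‖A - B‖ + ‖A - B‖ * ‖B‖ := add_le_add (norm_mul_le _ _) (norm_mul_le _ _)
    _ = (‖A‖ + ‖B‖) * ‖A - B‖ := by ring
  calc ‖(4:ℝ) • (A * (A - B) + (A - B) * B) - (4*Φ) • (A - B)‖
      ≤ ‖(4:ℝ) • (A * (A - B) + (A - B) * B)‖ + ‖(4*Φ) • (A - B)‖ := norm_sub_le _ _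
    _ = 4 * ‖A * (A - B) + (A - B) * B‖ + (4*Φ) * ‖A - B‖ := by
        rw [norm_smul, norm_smul]
        simp [Real.norm_eq_abs, abs_of_pos hΦ, abs_of_nonneg, mul_assoc]
    _ ≤ 4 * ((‖A‖ + ‖B‖) * ‖A - B‖) + (4*Φ) * ‖A - B‖ := by
        have := norm_nonneg (A - B); gcongr
    _ ≤ (8*R + 4*Φ) * ‖A - B‖ := by nlinarith [norm_nonneg (A - B)]

/-- For `Φ > 0` and a symmetric positive definite initial matrix `X₀` with
`Φ·I − X₀` positive definite, the matrix ODE `X' = 4 X (X − Φ·I)` (the evolution of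
the Jacobi operator under the normalized partial Ricci flow on a geodesic Riemannian
foliation) has a unique global solution with `X(0) = X₀`; this solution stays symmetric
positive definite with `Φ·I − X(t)` positive definite, tends (entrywise) to `0` as
`t → ∞` and to `Φ·I` as `t → −∞`. -/
theorem jacobi_operator_flow_convergence (n : ℕ) (hn : 1 ≤ n) (Φ : ℝ) (hΦ : 0 < Φ)
    (X₀ : Matrix (Fin n) (Fin n) ℝ) (hsymm : X₀.IsSymm) (hpos : X₀.PosDef)
    (hpos' : (Φ • (1 : Matrix (Fin n) (Fin n) ℝ) - X₀).PosDef) :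
    ∃ X : ℝ → Matrix (Fin n) (Fin n) ℝ,
      (X 0 = X₀ ∧ ∀ (t : ℝ) (i j : Fin n),
          HasDerivAt (fun s => X s i j)
            (((4 : ℝ) • (X t * (X t - Φ • (1 : Matrix (Fin n) (Fin n) ℝ)))) i j) t) ∧
      (∀ Y : ℝ → Matrix (Fin n) (Fin n) ℝ,
          (Y 0 = X₀ ∧ ∀ (t : ℝ) (i j : Fin n),
            HasDerivAt (fun s => Y s i j)
              (((4 : ℝ) • (Y t * (Y t - Φ • (1 : Matrix (Fin n) (Fin n) ℝ)))) i j) t) →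
          Y = X) ∧
      (∀ t : ℝ, (X t).IsSymm ∧ (X t).PosDef ∧
          (Φ • (1 : Matrix (Fin n) (Fin n) ℝ) - X t).PosDef) ∧
      (∀ i j : Fin n, Tendsto (fun t => X t i j) atTop (nhds 0)) ∧
      (∀ i j : Fin n, Tendsto (fun t => X t i j) atBot
          (nhds ((Φ • (1 : Matrix (Fin n) (Fin n) ℝ)) i j))) := by
  classical
  have hH : X₀.IsHermitian := hpos.1
  set U : Matrix (Fin n) (Fin n) ℝ := (hH.eigenvectorUnitary : Matrix (Fin n) (Fin n) ℝ)
    with hUdef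
  have hU2 : star U * U = 1 := Unitary.coe_star_mul_self hH.eigenvectorUnitary
  have hU1 : U * star U = 1 := Unitary.coe_mul_star_self hH.eigenvectorUnitary
  set e : Fin n → ℝ := hH.eigenvalues with hedef
  have hspec : X₀ = U * diagonal e * star U := by
    simpa [RCLike.ofReal_real_eq_id] using hH.spectral_theorem
  have he0 : ∀ k, 0 < e k := fun k => hpos.eigenvalues_pos k
  have hdiag1 : U * diagonal (fun _ : Fin n => Φ) * star U
      = Φ • (1 : Matrix (Fin n) (Fin n) ℝ) := by
    rw [← smul_one_eq_diag]
    rw [mul_smul_comm, mul_one, smul_mul_assoc, hU1]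
  -- the eigenvalues are < Φ
  have heΦ : ∀ k, e k < Φ := by
    have hc1 : Φ • (1 : Matrix (Fin n) (Fin n) ℝ) - X₀
        = U * diagonal (fun k => Φ - e k) * star U := by
      rw [hspec, ← hdiag1, ← conj_sub]
      congr 2
      ext i' j'
      by_cases h : i' = j' <;> simp [Matrix.diagonal_apply, h]
    have hd := posdef_conj hpos' hU2
    rw [hc1, conj_conj hU2] at hd
    intro k
    have := (Matrix.posDef_diagonal_iff).mp hd k
    linarith
  -- the solution
  set X : ℝ → Matrix (Fin n) (Fin n) ℝ :=
    fun t => U * diagonal (fun k => xsol Φ (e k) t) * star U with hXdef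
  have hent : ∀ t i j, X t i j = ∑ k, U i k * xsol Φ (e k) t * U j k := by
    intro t i j
    exact conj_entry U _ i j
  have hX0 : X 0 = X₀ := by
    have h1 : (fun k => xsol Φ (e k) 0) = e := funext fun k => xsol_zero (he0 k) hΦ
    show U * diagonal (fun k => xsol Φ (e k) 0) * star U = X₀
    rw [h1]
    exact hspec.symm
  -- difference with Φ•1 and the product, conjugated
  have hsub : ∀ t, Φ • (1 : Matrix (Fin n) (Fin n) ℝ) - X t
      = U * diagonal (fun k => Φ - xsol Φ (e k) t) * star U := by
    intro t
    show Φ • (1 : Matrix (Fin n) (Fin n) ℝ)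
        - U * diagonal (fun k => xsol Φ (e k) t) * star U = _
    rw [← hdiag1, ← conj_sub]
    congr 2
    ext i' j'
    by_cases h : i' = j' <;> simp [Matrix.diagonal_apply, h]
  have hprod : ∀ t, X t * (X t - Φ • (1 : Matrix (Fin n) (Fin n) ℝ))
      = U * diagonal (fun k => xsol Φ (e k) t * (xsol Φ (e k) t - Φ)) * star U := by
    intro t
    have h1 : X t - Φ • (1 : Matrix (Fin n) (Fin n) ℝ)
        = U * diagonal (fun k => xsol Φ (e k) t - Φ) * star U := by
      show U * diagonal (fun k => xsol Φ (e k) t) * star U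
          - Φ • (1 : Matrix (Fin n) (Fin n) ℝ) = _
      rw [← hdiag1, ← conj_sub]
      congr 2
      ext i' j'
      by_cases h : i' = j' <;> simp [Matrix.diagonal_apply, h]
    show (U * diagonal (fun k => xsol Φ (e k) t) * star U) * (X t - Φ • 1) = _
    rw [h1, conj_mul_conj hU2, Matrix.diagonal_mul_diagonal]
  have hderiv : ∀ (t : ℝ) (i j : Fin n),
      HasDerivAt (fun s => X s i j)
        (((4 : ℝ) • (X t * (X t - Φ • (1 : Matrix (Fin n) (Fin n) ℝ)))) i j) t := by
    intro t i j
    have hfun : (fun s => X s i j) = fun s => ∑ k, U i k * xsol Φ (e k) s * U j k :=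
      funext fun s => hent s i j
    rw [hfun]
    have hsum : HasDerivAt (fun s => ∑ k, U i k * xsol Φ (e k) s * U j k)
        (∑ k, U i k * (4 * xsol Φ (e k) t * (xsol Φ (e k) t - Φ)) * U j k) t := by
      apply HasDerivAt.fun_sum
      intro k _
      exact ((xsol_hasDerivAt (he0 k) (heΦ k) hΦ t).const_mul (U i k)).mul_const (U j k)
    convert hsum using 1
    rw [Matrix.smul_apply, hprod t, conj_entry, smul_eq_mul, Finset.mul_sum]
    apply Finset.sum_congr rfl
    intro k _
    ring
  -- positivity of conjugated diagonal matrices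
  have hposd : ∀ d : Fin n → ℝ, (∀ k, 0 < d k) → (U * diagonal d * star U).PosDef := by
    intro d hd
    have hdg : (diagonal d).PosDef := Matrix.posDef_diagonal_iff.mpr hd
    have := posdef_conj hdg (show star (star U) * star U = 1 by rw [star_star]; exact hU1)
    rwa [star_star] at this
  have hmem : ∀ t : ℝ, (X t).IsSymm ∧ (X t).PosDef ∧
      (Φ • (1 : Matrix (Fin n) (Fin n) ℝ) - X t).PosDef := by
    intro t
    refine ⟨?_, ?_, ?_⟩
    · rw [Matrix.IsSymm]
      ext i j
      rw [Matrix.transpose_apply, hent, hent]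
      apply Finset.sum_congr rfl
      intro k _
      ring
    · exact hposd _ fun k => xsol_pos (he0 k) (heΦ k) hΦ t
    · rw [hsub t]
      exact hposd _ fun k => sub_pos.mpr (xsol_lt (he0 k) (heΦ k) hΦ t)
  -- limits
  have hlimTop : ∀ i j : Fin n, Tendsto (fun t => X t i j) atTop (nhds 0) := by
    intro i j
    have h1 : ∀ t, X t i j = ∑ k, U i k * xsol Φ (e k) t * U j k := fun t => hent t i j
    simp only [h1]
    have h2 : Tendsto (fun t => ∑ k, U i k * xsol Φ (e k) t * U j k) atTop
        (nhds (∑ k : Fin n, U i k * (0:ℝ) * U j k)) := by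
      apply tendsto_finset_sum
      intro k _
      exact (((xsol_tendsto_atTop (he0 k) (heΦ k) hΦ)).const_mul (U i k)).mul_const (U j k)
    simpa using h2
  have hlimBot : ∀ i j : Fin n, Tendsto (fun t => X t i j) atBot
      (nhds ((Φ • (1 : Matrix (Fin n) (Fin n) ℝ)) i j)) := by
    intro i j
    have h1 : ∀ t, X t i j = ∑ k, U i k * xsol Φ (e k) t * U j k := fun t => hent t i j
    simp only [h1]
    have h2 : Tendsto (fun t => ∑ k, U i k * xsol Φ (e k) t * U j k) atBot
        (nhds (∑ k : Fin n, U i k * Φ * U j k)) := by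
      apply tendsto_finset_sum
      intro k _
      exact (((xsol_tendsto_atBot (he0 k) (heΦ k) hΦ)).const_mul (U i k)).mul_const (U j k)
    have h3 : (∑ k : Fin n, U i k * Φ * U j k)
        = (Φ • (1 : Matrix (Fin n) (Fin n) ℝ)) i j := by
      have h4 : (U * star U) i j = ∑ k, U i k * U j k := by
        simp [Matrix.mul_apply, Matrix.conjTranspose_apply]
      have h5 : (1 : Matrix (Fin n) (Fin n) ℝ) i j = ∑ k, U i k * U j k := by
        rw [← hU1, h4]
      rw [Matrix.smul_apply, h5, smul_eq_mul, Finset.mul_sum]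
      apply Finset.sum_congr rfl
      intro k _
      ring
    rw [← h3]
    exact h2
  -- uniqueness
  have huniq : ∀ Y : ℝ → Matrix (Fin n) (Fin n) ℝ,
      (Y 0 = X₀ ∧ ∀ (t : ℝ) (i j : Fin n),
        HasDerivAt (fun s => Y s i j)
          (((4 : ℝ) • (Y t * (Y t - Φ • (1 : Matrix (Fin n) (Fin n) ℝ)))) i j) t) →
      Y = X := by
    rintro Y ⟨hY0, hYd⟩
    have hYD : ∀ t, HasDerivAt Y (Fq Φ (Y t)) t := fun t =>
      hasDerivAt_matrix fun i j => hYd t i j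
    have hXD : ∀ t, HasDerivAt X (Fq Φ (X t)) t := fun t =>
      hasDerivAt_matrix fun i j => hderiv t i j
    have hYc : Continuous Y := by
      rw [continuous_iff_continuousAt]; exact fun t => (hYD t).continuousAt
    have hXc : Continuous X := by
      rw [continuous_iff_continuousAt]; exact fun t => (hXD t).continuousAt
    funext t₁
    set a : ℝ := -(|t₁| + 1) with hadef
    set b : ℝ := |t₁| + 1 with hbdef
    have hab : a < 0 ∧ (0:ℝ) < b :=
      ⟨by rw [hadef]; nlinarith [abs_nonneg t₁], by rw [hbdef]; positivity⟩
    have hbounded : Bornology.IsBounded (Y '' (Icc a b) ∪ X '' (Icc a b)) :=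
      ((isCompact_Icc.image hYc).union (isCompact_Icc.image hXc)).isBounded
    obtain ⟨R, hR0, hRsub⟩ := hbounded.subset_closedBall_lt 0 0
    have hmemY : ∀ t ∈ Icc a b, Y t ∈ Metric.closedBall (0 : Matrix (Fin n) (Fin n) ℝ) R :=
      fun t ht => hRsub (Or.inl ⟨t, ht, rfl⟩)
    have hmemX : ∀ t ∈ Icc a b, X t ∈ Metric.closedBall (0 : Matrix (Fin n) (Fin n) ℝ) R :=
      fun t ht => hRsub (Or.inr ⟨t, ht, rfl⟩)
    have hlip : ∀ t : ℝ, LipschitzOnWith (Real.toNNReal (8*R + 4*Φ))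
        (fun x => Fq (n := n) Φ x) (Metric.closedBall 0 R) :=
      fun _ => Fq_lipschitz Φ hΦ R hR0.le
    have ht0 : (0:ℝ) ∈ Ioo a b := ⟨hab.1, hab.2⟩
    have key := ODE_solution_unique_of_mem_Icc (v := fun _ x => Fq (n := n) Φ x)
      (s := fun _ => Metric.closedBall 0 R) (fun t _ => hlip t) ht0
      (hYc.continuousOn) (fun t _ => hYD t) (fun t ht => hmemY t (Ioo_subset_Icc_self ht))
      (hXc.continuousOn) (fun t _ => hXD t) (fun t ht => hmemX t (Ioo_subset_Icc_self ht))
      (by rw [hY0, hX0])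
    apply key
    constructor
    · rw [hadef]; nlinarith [neg_abs_le t₁, abs_nonneg t₁]
    · rw [hbdef]; nlinarith [le_abs_self t₁]
  exact ⟨X, ⟨hX0, hderiv⟩, huniq, hmem, hlimTop, hlimBot⟩
end

section
/- Let a < 0, y₀ ∈ ℝ, and let α, ν : [0,∞) → ℝ be continuous with α(t) ≤ a for all t ≥ 0 and ν bounded. Let y : [0,∞) → ℝ be differentiable with y′(t) = α(t) y(t) + ν(t) for all t ≥ 0 and y(0) = y₀. Then for every θ ∈ (0,1) and every t ≥ 0: |y(t)| ≤ |y₀| e^{at} + |a|⁻¹ e^{(1−θ)at} sup_{τ∈[0,θt]} |ν(τ)| + |a|⁻¹ sup_{τ∈[θt,t]} |ν(τ)|. -/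
open Real Filter Set
open scoped Topology

lemma linear_ode_core (a : ℝ) (α ν y : ℝ → ℝ)
    (hαa : ∀ t ∈ Ici (0 : ℝ), α t ≤ a)
    (hy : ∀ t ∈ Ici (0 : ℝ), HasDerivWithinAt y (α t * y t + ν t) (Ici 0) t)
    (s t M : ℝ) (hs : 0 ≤ s) (hst : s ≤ t)
    (hM : ∀ τ ∈ Icc s t, |ν τ| ≤ M) :
    |y t| ≤ gronwallBound |y s| a M (t - s) := by
  have hcont : ContinuousOn y (Ici 0) := fun x hx => (hy x hx).continuousWithinAt
  have hsub : Icc s t ⊆ Ici 0 := fun x hx => le_trans hs hx.1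
  refine le_gronwallBound_of_liminf_deriv_right_le (f := fun τ => |y τ|)
    (f' := fun τ => a * |y τ| + M) ((hcont.mono hsub).abs) ?_ le_rfl
    (fun x _ => le_rfl) t (right_mem_Icc.2 hst)
  intro x hx r hr
  have hx0 : (0:ℝ) ≤ x := le_trans hs hx.1
  set d := α x * y x + ν x with hd_def
  have hd : HasDerivWithinAt y d (Ioi x) x :=
    (hy x hx0).mono (fun z hz => le_trans hx0 (le_of_lt hz))
  have hslope : Tendsto (slope y x) (𝓝[>] x) (𝓝 d) := by
    have h := hasDerivWithinAt_iff_tendsto_slope.1 hd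
    have he : Ioi x \ {x} = Ioi x := Set.diff_singleton_eq_self notMem_Ioi_self
    rwa [he] at h
  have hM' : |ν x| ≤ M := hM x ⟨hx.1, le_of_lt hx.2⟩
  have hslope_eq : ∀ z, slope y x z = (z - x)⁻¹ * (y z - y x) := by
    intro z; rw [slope_def_field]; ring
  have key : ∃ L, L ≤ a * |y x| + M ∧
      Tendsto (fun z => (z - x)⁻¹ * (|y z| - |y x|)) (𝓝[>] x) (𝓝 L) := by
    rcases lt_trichotomy (y x) 0 with hyx | hyx | hyx
    · refine ⟨-d, ?_, ?_⟩
      · have h1 : -(α x * y x) ≤ a * |y x| := by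
          rw [abs_of_neg hyx]
          nlinarith [hαa x hx0]
        have h2 : -ν x ≤ |ν x| := neg_le_abs _
        rw [hd_def]; linarith
      · have hev : ∀ᶠ z in 𝓝[>] x, y z < 0 := by
          have h2 : Tendsto y (𝓝[>] x) (𝓝 (y x)) := hd.continuousWithinAt
          exact h2 (Iio_mem_nhds hyx)
        refine (hslope.neg).congr' ?_
        filter_upwards [hev, self_mem_nhdsWithin] with z hz hz'
        rw [hslope_eq, abs_of_neg hz, abs_of_neg hyx]; ring
    · refine ⟨|d|, ?_, ?_⟩
      · have : d = ν x := by rw [hd_def, hyx]; ring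
        rw [this, hyx, abs_zero, mul_zero, zero_add]; exact hM'
      · refine (hslope.abs).congr' ?_
        filter_upwards [self_mem_nhdsWithin] with z hz
        rw [hslope_eq, abs_mul, abs_of_nonneg (inv_nonneg.2 (le_of_lt (sub_pos.2 hz))),
          hyx, abs_zero, sub_zero, sub_zero]
    · refine ⟨d, ?_, ?_⟩
      · have h1 : α x * y x ≤ a * |y x| := by
          rw [abs_of_pos hyx]
          nlinarith [hαa x hx0]
        have h2 : ν x ≤ |ν x| := le_abs_self _
        rw [hd_def]; linarith
      · have hev : ∀ᶠ z in 𝓝[>] x, 0 < y z := by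
          have h2 : Tendsto y (𝓝[>] x) (𝓝 (y x)) := hd.continuousWithinAt
          exact h2 (Ioi_mem_nhds hyx)
        refine hslope.congr' ?_
        filter_upwards [hev, self_mem_nhdsWithin] with z hz hz'
        rw [hslope_eq, abs_of_pos hz, abs_of_pos hyx]
  obtain ⟨L, hL, hT⟩ := key
  have hev : ∀ᶠ z in 𝓝[>] x, (z - x)⁻¹ * (|y z| - |y x|) < r :=
    hT (Iio_mem_nhds (lt_of_le_of_lt hL hr))
  exact hev.frequently

/-- Stability estimate for the scalar linear nonautonomous ODE `y' = α(t) y + ν(t)`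
with `α(t) ≤ a < 0` and bounded forcing `ν`:
`|y(t)| ≤ |y₀| e^{at} + |a|⁻¹ e^{(1-θ)at} sup_{[0,θt]} |ν| + |a|⁻¹ sup_{[θt,t]} |ν|`. -/
theorem linear_ode_stability_estimate (a y₀ : ℝ) (ha : a < 0) (α ν y : ℝ → ℝ)
    (hα : ContinuousOn α (Ici 0)) (hν : ContinuousOn ν (Ici 0))
    (hαa : ∀ t ∈ Ici (0 : ℝ), α t ≤ a)
    (hνb : ∃ B : ℝ, ∀ t ∈ Ici (0 : ℝ), |ν t| ≤ B)
    (hy : ∀ t ∈ Ici (0 : ℝ), HasDerivWithinAt y (α t * y t + ν t) (Ici 0) t)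
    (hy0 : y 0 = y₀) :
    ∀ θ ∈ Ioo (0 : ℝ) 1, ∀ t ∈ Ici (0 : ℝ),
      |y t| ≤ |y₀| * Real.exp (a * t)
        + |a|⁻¹ * Real.exp ((1 - θ) * a * t) * sSup ((fun τ => |ν τ|) '' Icc 0 (θ * t))
        + |a|⁻¹ * sSup ((fun τ => |ν τ|) '' Icc (θ * t) t) := by
  intro θ hθ t ht
  have ht0 : (0:ℝ) ≤ t := ht
  set s := θ * t with hs_def
  have hs0 : 0 ≤ s := mul_nonneg hθ.1.le ht0
  have hst : s ≤ t := by nlinarith [hθ.2, hθ.1]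
  have hνabs : ContinuousOn (fun τ => |ν τ|) (Ici 0) := hν.abs
  have hsub0 : Icc (0:ℝ) s ⊆ Ici 0 := Icc_subset_Ici_self
  have hsub1 : Icc s t ⊆ Ici 0 := fun x hx => le_trans hs0 hx.1
  set M₀ := sSup ((fun τ => |ν τ|) '' Icc 0 s) with hM0_def
  set M₁ := sSup ((fun τ => |ν τ|) '' Icc s t) with hM1_def
  have hbdd0 : BddAbove ((fun τ => |ν τ|) '' Icc 0 s) :=
    (isCompact_Icc.image_of_continuousOn (hνabs.mono hsub0)).bddAbove
  have hbdd1 : BddAbove ((fun τ => |ν τ|) '' Icc s t) :=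
    (isCompact_Icc.image_of_continuousOn (hνabs.mono hsub1)).bddAbove
  have hub0 : ∀ τ ∈ Icc (0:ℝ) s, |ν τ| ≤ M₀ := fun τ hτ => le_csSup hbdd0 ⟨τ, hτ, rfl⟩
  have hub1 : ∀ τ ∈ Icc s t, |ν τ| ≤ M₁ := fun τ hτ => le_csSup hbdd1 ⟨τ, hτ, rfl⟩
  have hM0nn : 0 ≤ M₀ := le_trans (abs_nonneg _) (hub0 0 (left_mem_Icc.2 hs0))
  have hM1nn : 0 ≤ M₁ := le_trans (abs_nonneg _) (hub1 s (left_mem_Icc.2 hst))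
  have hA := linear_ode_core a α ν y hαa hy 0 s M₀ le_rfl hs0 hub0
  have hB := linear_ode_core a α ν y hαa hy s t M₁ hs0 hst hub1
  rw [gronwallBound_of_K_ne_0 ha.ne] at hA hB
  simp only [hy0] at hA
  set E1 := Real.exp (a * (s - 0)) with hE1_def
  set E2 := Real.exp (a * (t - s)) with hE2_def
  have hE1pos : 0 < E1 := Real.exp_pos _
  have hE2pos : 0 < E2 := Real.exp_pos _
  have hE1le : E1 ≤ 1 := Real.exp_le_one_iff.2 (by nlinarith)
  have hE2le : E2 ≤ 1 := Real.exp_le_one_iff.2 (by nlinarith)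
  have hprod : Real.exp (a * t) = E1 * E2 := by
    rw [hE1_def, hE2_def, ← Real.exp_add]; ring_nf
  have hexp2 : Real.exp ((1 - θ) * a * t) = E2 := by
    rw [hE2_def, hs_def]; ring_nf
  have habs : |a| = -a := abs_of_neg ha
  -- step bounds for the forcing terms
  have step1 : M₀ / a * (E1 - 1) ≤ (-a)⁻¹ * M₀ := by
    rw [div_mul_eq_mul_div, div_le_iff_of_neg ha]
    have h : (-a)⁻¹ * M₀ * a = -M₀ := by
      field_simp
      rw [mul_comm, mul_div_assoc, div_self ha.ne, mul_one]
    rw [h]; nlinarith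
  have step2 : M₁ / a * (E2 - 1) ≤ (-a)⁻¹ * M₁ := by
    rw [div_mul_eq_mul_div, div_le_iff_of_neg ha]
    have h : (-a)⁻¹ * M₁ * a = -M₁ := by
      field_simp
      rw [mul_comm, mul_div_assoc, div_self ha.ne, mul_one]
    rw [h]; nlinarith
  have h1 : |y s| * E2 ≤ (|y₀| * E1 + M₀ / a * (E1 - 1)) * E2 :=
    mul_le_mul_of_nonneg_right hA hE2pos.le
  have h1' : (M₀ / a * (E1 - 1)) * E2 ≤ ((-a)⁻¹ * M₀) * E2 :=
    mul_le_mul_of_nonneg_right step1 hE2pos.le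
  rw [hprod, hexp2, habs]
  nlinarith [hB, h1, h1', step2]
end

section
/- Let a < 0, y₀ ∈ ℝ, and let α, ν : [0,∞) → ℝ be continuous with α(t) ≤ a for all t ≥ 0 and ν bounded. Let y : [0,∞) → ℝ be differentiable with y′(t) = α(t) y(t) + ν(t) for all t ≥ 0 and y(0) = y₀. If ν(t) → 0 as t → ∞, then y(t) → 0 as t → ∞. -/
open Real Filter Set

lemma my_gronwall {f f' : ℝ → ℝ} {δ K ε T b : ℝ} (hf : ContinuousOn f (Icc T b))
    (hf' : ∀ x ∈ Ico T b, HasDerivWithinAt f (f' x) (Ici x) x)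
    (hT : f T ≤ δ) (bound : ∀ x ∈ Ico T b, f' x ≤ K * f x + ε) :
    ∀ x ∈ Icc T b, f x ≤ gronwallBound δ K ε (x - T) :=
  le_gronwallBound_of_liminf_deriv_right_le hf
    (fun x hx _r hr => (hf' x hx).liminf_right_slope_le hr) hT bound

lemma my_gronwallBound_le {δ K ε x : ℝ} (hK : K < 0) (hδ : 0 ≤ δ) (hε : 0 ≤ ε) (hx : 0 ≤ x) :
    gronwallBound δ K ε x ≤ δ * Real.exp (K * x) + ε / (-K) := by
  rw [gronwallBound_of_K_ne_0 hK.ne]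
  have h1 : Real.exp (K * x) ≤ 1 := Real.exp_le_one_iff.mpr (by nlinarith)
  have h2 : 0 < Real.exp (K * x) := Real.exp_pos _
  have h3 : ε / K = -(ε / (-K)) := by field_simp
  have h4 : 0 ≤ ε / (-K) := div_nonneg hε (by linarith)
  simp only
  rw [h3]
  nlinarith

/-- Stabilization for the scalar linear nonautonomous ODE `y' = α(t) y + ν(t)` with
`α(t) ≤ a < 0` and bounded forcing: if `ν(t) → 0` as `t → ∞`, then `y(t) → 0`. -/
theorem linear_ode_stabilization (a y₀ : ℝ) (ha : a < 0) (α ν y : ℝ → ℝ)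
    (hα : ContinuousOn α (Ici 0)) (hν : ContinuousOn ν (Ici 0))
    (hαa : ∀ t ∈ Ici (0 : ℝ), α t ≤ a)
    (hνb : ∃ B : ℝ, ∀ t ∈ Ici (0 : ℝ), |ν t| ≤ B)
    (hy : ∀ t ∈ Ici (0 : ℝ), HasDerivWithinAt y (α t * y t + ν t) (Ici 0) t)
    (hy0 : y 0 = y₀)
    (hν0 : Tendsto ν atTop (nhds 0)) :
    Tendsto y atTop (nhds 0) := by
  obtain ⟨B, hB⟩ := hνb
  have hB0 : 0 ≤ B := le_trans (abs_nonneg _) (hB 0 self_mem_Ici)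
  have hna : 0 < -a := by linarith
  set v : ℝ → ℝ := fun t => y t ^ 2 with hv_def
  set g : ℝ → ℝ := fun t => 2 * y t * (α t * y t + ν t) with hg_def
  have hv' : ∀ t ∈ Ici (0:ℝ), HasDerivWithinAt v (g t) (Ici 0) t := by
    intro t ht
    have h := (hy t ht).pow 2
    simp at h
    exact h
  have hvc : ContinuousOn v (Ici 0) := fun t ht => (hv' t ht).continuousWithinAt
  -- pointwise differential inequality
  have hstep : ∀ t ∈ Ici (0:ℝ), ∀ e : ℝ, |ν t| ≤ e → g t ≤ a * v t + e ^ 2 / (-a) := by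
    intro t ht e he
    have hα' := hαa t ht
    have hν2 : ν t ^ 2 ≤ e ^ 2 := by nlinarith [abs_nonneg (ν t), sq_abs (ν t)]
    have h1 : 2 * (α t) * y t ^ 2 ≤ 2 * a * y t ^ 2 := by nlinarith [sq_nonneg (y t)]
    have h2 : 2 * y t * ν t ≤ (-a) * y t ^ 2 + ν t ^ 2 / (-a) := by
      rw [← sub_nonneg]
      have ha0 : a ≠ 0 := ha.ne
      have heq : (-a) * y t ^ 2 + ν t ^ 2 / (-a) - 2 * y t * ν t
          = ((-a) * y t - ν t) ^ 2 / (-a) := by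
        field_simp
        ring
      rw [heq]
      positivity
    have h3 : ν t ^ 2 / (-a) ≤ e ^ 2 / (-a) := by gcongr
    simp only [hv_def, hg_def]
    nlinarith [h1, h2, h3]
  -- a-priori global bound
  set M : ℝ := y 0 ^ 2 + B ^ 2 / (-a) / (-a) with hM_def
  have hM0 : 0 ≤ M := by positivity
  have hεB : (0:ℝ) ≤ B ^ 2 / (-a) := by positivity
  have hM : ∀ t ∈ Ici (0:ℝ), v t ≤ M := by
    intro t ht
    have key := my_gronwall (f := v) (f' := g) (T := 0) (b := t) (δ := v 0) (K := a)
      (ε := B ^ 2 / (-a)) (hvc.mono Icc_subset_Ici_self)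
      (fun x hx => (hv' x hx.1).mono (Ici_subset_Ici.mpr hx.1))
      le_rfl
      (fun x hx => hstep x hx.1 B (hB x hx.1))
    have h6 := key t ⟨ht, le_rfl⟩
    have h7 := my_gronwallBound_le (δ := v 0) (K := a) (ε := B ^ 2 / (-a)) (x := t - 0)
      ha (sq_nonneg _) hεB (by simpa using ht)
    have h8 : Real.exp (a * (t - 0)) ≤ 1 :=
      Real.exp_le_one_iff.mpr (by simp only [sub_zero]; nlinarith [mem_Ici.mp ht])
    have h9 : v 0 * Real.exp (a * (t - 0)) ≤ v 0 * 1 :=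
      mul_le_mul_of_nonneg_left h8 (sq_nonneg _)
    have h10 : v 0 = y 0 ^ 2 := rfl
    calc v t ≤ gronwallBound (v 0) a (B ^ 2 / (-a)) (t - 0) := h6
      _ ≤ v 0 * Real.exp (a * (t - 0)) + B ^ 2 / (-a) / (-a) := h7
      _ ≤ y 0 ^ 2 + B ^ 2 / (-a) / (-a) := by rw [← h10]; linarith
      _ = M := hM_def.symm
  -- v tends to 0
  have hvt : Tendsto v atTop (nhds 0) := by
    rw [Metric.tendsto_atTop]
    intro c hc
    set e : ℝ := (-a) * Real.sqrt (c / 4) with he_def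
    have he : 0 < e := mul_pos hna (Real.sqrt_pos.mpr (by linarith))
    have heq : e ^ 2 / (-a) / (-a) = c / 4 := by
      have ha0 : a ≠ 0 := ha.ne
      rw [he_def, mul_pow, Real.sq_sqrt (by linarith : (0:ℝ) ≤ c / 4)]
      field_simp
    obtain ⟨T₀, hT₀⟩ := Metric.tendsto_atTop.mp hν0 e he
    set T : ℝ := max T₀ 0 with hT_def
    have hT0 : (0:ℝ) ≤ T := le_max_right _ _
    have hT : ∀ t, T ≤ t → |ν t| ≤ e := by
      intro t htt
      have := hT₀ t (le_trans (le_max_left _ _) htt)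
      rw [Real.dist_eq, sub_zero] at this
      exact this.le
    have hlim : Tendsto (fun L => M * Real.exp (a * L)) atTop (nhds 0) := by
      have h1 : Tendsto (fun L : ℝ => (-a) * L) atTop atTop :=
        Tendsto.const_mul_atTop hna tendsto_id
      have h2 : Tendsto (fun L : ℝ => Real.exp (-((-a) * L))) atTop (nhds 0) :=
        Real.tendsto_exp_neg_atTop_nhds_zero.comp h1
      have h3 : Tendsto (fun L : ℝ => Real.exp (a * L)) atTop (nhds 0) := by
        simpa [neg_mul, neg_neg] using h2
      simpa using h3.const_mul M
    obtain ⟨L, hL0, hL⟩ : ∃ L, 0 ≤ L ∧ M * Real.exp (a * L) < c / 4 := by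
      have h4 := (hlim.eventually (gt_mem_nhds (show (0:ℝ) < c / 4 by linarith))).and
        (eventually_ge_atTop (0:ℝ))
      obtain ⟨L, h1, h2⟩ := h4.exists
      exact ⟨L, h2, h1⟩
    refine ⟨T + L, fun t htL => ?_⟩
    have htT : T ≤ t := by linarith
    have ht0 : (0:ℝ) ≤ t := le_trans hT0 htT
    have key := my_gronwall (f := v) (f' := g) (T := T) (b := t) (δ := v T) (K := a)
      (ε := e ^ 2 / (-a))
      (hvc.mono (fun x hx => le_trans hT0 hx.1))
      (fun x hx => (hv' x (le_trans hT0 hx.1)).mono (Ici_subset_Ici.mpr (le_trans hT0 hx.1)))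
      le_rfl
      (fun x hx => hstep x (le_trans hT0 hx.1) e (hT x hx.1))
    have h6 := key t ⟨htT, le_rfl⟩
    have h7 := my_gronwallBound_le (δ := v T) (K := a) (ε := e ^ 2 / (-a)) (x := t - T)
      ha (sq_nonneg _) (by positivity) (by linarith)
    have h8 : Real.exp (a * (t - T)) ≤ Real.exp (a * L) :=
      Real.exp_le_exp.mpr (by nlinarith)
    have h9 : v T * Real.exp (a * (t - T)) ≤ M * Real.exp (a * L) :=
      mul_le_mul (hM T hT0) h8 (Real.exp_pos _).le hM0
    have h10 : v t ≤ M * Real.exp (a * L) + c / 4 := by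
      rw [← heq]
      calc v t ≤ gronwallBound (v T) a (e ^ 2 / (-a)) (t - T) := h6
        _ ≤ v T * Real.exp (a * (t - T)) + e ^ 2 / (-a) / (-a) := h7
        _ ≤ M * Real.exp (a * L) + e ^ 2 / (-a) / (-a) := add_le_add_left h9 _
    rw [Real.dist_eq, sub_zero, abs_of_nonneg (sq_nonneg (y t))]
    calc y t ^ 2 ≤ M * Real.exp (a * L) + c / 4 := h10
      _ < c / 4 + c / 4 := by linarith
      _ < c := by linarith
  -- conclude
  have habs : Tendsto (fun t => |y t|) atTop (nhds 0) := by
    have h := (Real.continuous_sqrt.tendsto 0).comp hvt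
    simpa [Function.comp_def, hv_def, Real.sqrt_sq_eq_abs] using h
  exact tendsto_zero_iff_norm_tendsto_zero.mpr (by simpa [Real.norm_eq_abs] using habs)
end

section
/- Let l > 0, Φ ∈ ℝ, let f : [0,∞) × [0,l] → ℝ be continuous, and let v : [0,∞) × [0,l] → ℝ be continuous, continuously differentiable in t, twice continuously differentiable in x (with jointly continuous derivatives), satisfying ∂_t v(t,x) = ∂_x² v(t,x) + Φ v(t,x) + f(t,x) and the homogeneous boundary conditions v(t,0) = v(t,l) = 0 for all t ≥ 0. For each integer j ≥ 1 define v_j(t) := (2/l)∫₀^l v(t,s) sin(πjs/l) ds and f_j(t) := (2/l)∫₀^l f(t,s) sin(πjs/l) ds. Then v_j is differentiable and v_j′(t) = (Φ − (πj/l)²) v_j(t) + f_j(t) for every t ≥ 0. -/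
open Real Filter Set MeasureTheory intervalIntegral
open Topology

set_option maxHeartbeats 1000000

/-- Reduction of the heat equation with lower-order term to scalar ODEs: if `v` solves
`∂ₜv = ∂ₓ²v + Φv + f(t,x)` on `[0,∞) × [0,l]` with homogeneous boundary conditions
`v(t,0) = v(t,l) = 0`, then each Fourier sine coefficient
`v_j(t) = (2/l)∫₀ˡ v(t,s) sin(πjs/l) ds` is differentiable and satisfies
`v_j′ = (Φ − (πj/l)²) v_j + f_j` where `f_j(t) = (2/l)∫₀ˡ f(t,s) sin(πjs/l) ds`. -/
theorem fourier_coefficients_ode (l Φ : ℝ) (hl : 0 < l)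
    (f : ℝ → ℝ → ℝ)
    (hf : ContinuousOn (fun p : ℝ × ℝ => f p.1 p.2) (Ici 0 ×ˢ Icc 0 l))
    (v : ℝ → ℝ → ℝ)
    (hvcont : ContinuousOn (fun p : ℝ × ℝ => v p.1 p.2) (Ici 0 ×ˢ Icc 0 l))
    (hvt : ∀ t ∈ Ici (0 : ℝ), ∀ x ∈ Icc 0 l,
      DifferentiableWithinAt ℝ (fun s => v s x) (Ici 0) t)
    (hvx1 : ∀ t ∈ Ici (0 : ℝ), ∀ x ∈ Icc 0 l,
      DifferentiableWithinAt ℝ (v t) (Icc 0 l) x)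
    (hvx2 : ∀ t ∈ Ici (0 : ℝ), ∀ x ∈ Icc 0 l,
      DifferentiableWithinAt ℝ (derivWithin (v t) (Icc 0 l)) (Icc 0 l) x)
    (hvtcont : ContinuousOn
      (fun p : ℝ × ℝ => derivWithin (fun s => v s p.2) (Ici 0) p.1) (Ici 0 ×ˢ Icc 0 l))
    (hvxcont : ContinuousOn
      (fun p : ℝ × ℝ => derivWithin (derivWithin (v p.1) (Icc 0 l)) (Icc 0 l) p.2)
      (Ici 0 ×ˢ Icc 0 l))
    (hPDE : ∀ t ∈ Ici (0 : ℝ), ∀ x ∈ Icc 0 l,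
      derivWithin (fun s => v s x) (Ici 0) t
        = derivWithin (derivWithin (v t) (Icc 0 l)) (Icc 0 l) x + Φ * v t x + f t x)
    (hbd0 : ∀ t ∈ Ici (0 : ℝ), v t 0 = 0)
    (hbdl : ∀ t ∈ Ici (0 : ℝ), v t l = 0) :
    ∀ j : ℕ, 1 ≤ j → ∀ t ∈ Ici (0 : ℝ),
      HasDerivWithinAt
        (fun τ => (2 / l) * ∫ s in (0 : ℝ)..l, v τ s * Real.sin (π * (j : ℝ) * s / l))
        ((Φ - (π * (j : ℝ) / l) ^ 2)
            * ((2 / l) * ∫ s in (0 : ℝ)..l, v t s * Real.sin (π * (j : ℝ) * s / l))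
          + (2 / l) * ∫ s in (0 : ℝ)..l, f t s * Real.sin (π * (j : ℝ) * s / l))
        (Ici 0) t := by
  intro j hj t ht
  have hl' : l ≠ 0 := ne_of_gt hl
  set k : ℝ := π * (j : ℝ) / l with hk
  have harg : ∀ s : ℝ, π * (j : ℝ) * s / l = k * s := fun s => by rw [hk]; ring
  simp only [harg]
  -- notation
  set dtv : ℝ → ℝ → ℝ := fun σ s => derivWithin (fun τ => v τ s) (Ici 0) σ with hdtvdef
  set vxx : ℝ → ℝ → ℝ := fun σ s => derivWithin (derivWithin (v σ) (Icc 0 l)) (Icc 0 l) s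
    with hvxxdef
  set g : ℝ → ℝ → ℝ := fun σ s => dtv σ s * Real.sin (k * s) with hgdef
  set G : ℝ → ℝ := fun σ => ∫ s in (0 : ℝ)..l, g σ s with hGdef
  -- continuity of the uncurried g
  have hgc : ContinuousOn (fun p : ℝ × ℝ => g p.1 p.2) (Ici 0 ×ˢ Icc 0 l) := by
    exact hvtcont.mul ((Real.continuous_sin.comp (continuous_const.mul continuous_snd)).continuousOn)
  have hg_slice : ∀ σ ∈ Ici (0 : ℝ), ContinuousOn (g σ) (Icc 0 l) := by
    intro σ hσ
    exact hgc.comp (continuous_const.prodMk continuous_id).continuousOn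
      (fun s hs => ⟨hσ, hs⟩)
  have hg_time : ∀ s ∈ Icc (0 : ℝ) l, ContinuousOn (fun σ => g σ s) (Ici 0) := by
    intro s hs
    exact hgc.comp (continuous_id.prodMk continuous_const).continuousOn
      (fun σ hσ => ⟨hσ, hs⟩)
  have hdtv_time : ∀ s ∈ Icc (0 : ℝ) l, ContinuousOn (fun σ => dtv σ s) (Ici 0) := by
    intro s hs
    exact hvtcont.comp (continuous_id.prodMk continuous_const).continuousOn
      (fun σ hσ => ⟨hσ, hs⟩)
  have hv_slice : ∀ σ ∈ Ici (0 : ℝ), ContinuousOn (fun s => v σ s) (Icc 0 l) := by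
    intro σ hσ
    exact hvcont.comp (continuous_const.prodMk continuous_id).continuousOn
      (fun s hs => ⟨hσ, hs⟩)
  have hv_time : ∀ s ∈ Icc (0 : ℝ) l, ContinuousOn (fun σ => v σ s) (Ici 0) := by
    intro s hs
    exact hvcont.comp (continuous_id.prodMk continuous_const).continuousOn
      (fun σ hσ => ⟨hσ, hs⟩)
  have hvxx_slice : ∀ σ ∈ Ici (0 : ℝ), ContinuousOn (fun s => vxx σ s) (Icc 0 l) := by
    intro σ hσ
    exact hvxcont.comp (continuous_const.prodMk continuous_id).continuousOn
      (fun s hs => ⟨hσ, hs⟩)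
  have hf_slice : ∀ σ ∈ Ici (0 : ℝ), ContinuousOn (fun s => f σ s) (Icc 0 l) := by
    intro σ hσ
    exact hf.comp (continuous_const.prodMk continuous_id).continuousOn
      (fun s hs => ⟨hσ, hs⟩)
  have hsinc : Continuous fun s : ℝ => Real.sin (k * s) :=
    Real.continuous_sin.comp (continuous_const.mul continuous_id)
  have hcosc : Continuous fun s : ℝ => Real.cos (k * s) :=
    Real.continuous_cos.comp (continuous_const.mul continuous_id)
  -- G is continuous on `Ici 0`
  have hGcont : ContinuousOn G (Ici 0) := by
    intro σ₀ hσ₀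
    obtain ⟨C, hC⟩ := ((isCompact_Icc (a := (0:ℝ)) (b := σ₀ + 1)).prod
      (isCompact_Icc (a := (0:ℝ)) (b := l))).exists_bound_of_continuousOn
      (hgc.mono (prod_mono Icc_subset_Ici_self subset_rfl))
    apply intervalIntegral.continuousWithinAt_of_dominated_interval (bound := fun _ => C)
    · filter_upwards [self_mem_nhdsWithin] with σ hσ
      rw [uIoc_of_le hl.le]
      exact ((hg_slice σ hσ).mono Ioc_subset_Icc_self).aestronglyMeasurable measurableSet_Ioc
    · have hIic : Iic (σ₀ + 1) ∈ 𝓝[Ici 0] σ₀ :=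
        nhdsWithin_le_nhds (Iic_mem_nhds (by linarith))
      filter_upwards [self_mem_nhdsWithin, hIic] with σ hσ hσ'
      refine ae_of_all _ fun s hs => ?_
      have hs' : s ∈ Icc 0 l := Ioc_subset_Icc_self (by rwa [uIoc_of_le hl.le] at hs)
      exact hC (σ, s) ⟨⟨hσ, hσ'⟩, hs'⟩
    · exact intervalIntegrable_const
    · refine ae_of_all _ fun s hs => ?_
      have hs' : s ∈ Icc 0 l := Ioc_subset_Icc_self (by rwa [uIoc_of_le hl.le] at hs)
      exact hg_time s hs' σ₀ hσ₀
  -- representation formula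
  have hrep : ∀ τ ∈ Ici (0 : ℝ),
      (∫ s in (0 : ℝ)..l, v τ s * Real.sin (k * s))
        = (∫ s in (0 : ℝ)..l, v 0 s * Real.sin (k * s)) + ∫ σ in (0 : ℝ)..τ, G σ := by
    intro τ hτ
    have hFTC : ∀ s ∈ Icc (0 : ℝ) l, (∫ σ in (0 : ℝ)..τ, dtv σ s) = v τ s - v 0 s := by
      intro s hs
      refine intervalIntegral.integral_eq_sub_of_hasDeriv_right_of_le hτ
        ((hv_time s hs).mono (Icc_subset_Ici_self)) ?_ ?_
      · intro σ hσ
        exact ((hvt σ (le_of_lt hσ.1) s hs).hasDerivWithinAt).mono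
          (fun x hx => le_of_lt (lt_of_le_of_lt hσ.1.le hx))
      · exact (((hdtv_time s hs)).mono (by rw [uIcc_of_le hτ]; exact Icc_subset_Ici_self)).intervalIntegrable
    have h1 : ∀ s ∈ Icc (0 : ℝ) l,
        v τ s * Real.sin (k * s) - v 0 s * Real.sin (k * s) = ∫ σ in (0 : ℝ)..τ, g σ s := by
      intro s hs
      have : (∫ σ in (0 : ℝ)..τ, g σ s) = (∫ σ in (0 : ℝ)..τ, dtv σ s) * Real.sin (k * s) := by
        rw [← intervalIntegral.integral_mul_const]
      rw [this, hFTC s hs]; ring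
    have hIτ : IntervalIntegrable (fun s => v τ s * Real.sin (k * s)) volume 0 l :=
      (((hv_slice τ hτ).mul hsinc.continuousOn).mono (by rw [uIcc_of_le hl.le])).intervalIntegrable
    have hI0 : IntervalIntegrable (fun s => v 0 s * Real.sin (k * s)) volume 0 l :=
      (((hv_slice 0 Set.self_mem_Ici).mul hsinc.continuousOn).mono (by rw [uIcc_of_le hl.le])).intervalIntegrable
    have key : (∫ s in (0 : ℝ)..l, (v τ s * Real.sin (k * s) - v 0 s * Real.sin (k * s)))
        = ∫ s in (0 : ℝ)..l, ∫ σ in (0 : ℝ)..τ, g σ s :=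
      intervalIntegral.integral_congr (fun s hs => h1 s (by rwa [uIcc_of_le hl.le] at hs))
    rw [intervalIntegral.integral_sub hIτ hI0] at key
    have hswap : (∫ s in (0 : ℝ)..l, ∫ σ in (0 : ℝ)..τ, g σ s) = ∫ σ in (0 : ℝ)..τ, G σ := by
      simp only [hGdef, intervalIntegral.integral_of_le hτ, intervalIntegral.integral_of_le hl.le]
      apply MeasureTheory.integral_integral_swap
      rw [Function.uncurry_def, Measure.prod_restrict]
      have hint : IntegrableOn (fun p : ℝ × ℝ => g p.2 p.1) (Icc 0 l ×ˢ Icc 0 τ)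
          (volume.prod volume) := by
        apply ContinuousOn.integrableOn_compact (isCompact_Icc.prod isCompact_Icc)
        exact hgc.comp continuous_swap.continuousOn (fun p hp => ⟨hp.2.1, hp.1⟩)
      exact hint.mono_set (prod_mono Ioc_subset_Icc_self Ioc_subset_Icc_self)
    linarith [key, hswap]
  -- differentiability of the primitive
  have hGint : IntervalIntegrable G volume 0 t :=
    ((hGcont.mono (by rw [uIcc_of_le ht]; exact Icc_subset_Ici_self))).intervalIntegrable
  have hprim : HasDerivWithinAt (fun τ => ∫ σ in (0 : ℝ)..τ, G σ) (G t) (Ici 0) t := by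
    rcases eq_or_lt_of_le (show (0:ℝ) ≤ t from ht) with h0 | hpos
    · subst h0
      exact intervalIntegral.integral_hasDerivWithinAt_right hGint
        ⟨Ici 0, mem_of_superset self_mem_nhdsWithin Ioi_subset_Ici_self,
          hGcont.aestronglyMeasurable measurableSet_Ici⟩
        ((hGcont 0 Set.self_mem_Ici).mono Ioi_subset_Ici_self)
    · exact (intervalIntegral.integral_hasDerivAt_right hGint
        ⟨Ici 0, Ici_mem_nhds hpos, hGcont.aestronglyMeasurable measurableSet_Ici⟩
        (hGcont.continuousAt (Ici_mem_nhds hpos))).hasDerivWithinAt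
  have hHd : HasDerivWithinAt (fun τ => ∫ s in (0 : ℝ)..l, v τ s * Real.sin (k * s)) (G t)
      (Ici 0) t :=
    (hprim.const_add (∫ s in (0 : ℝ)..l, v 0 s * Real.sin (k * s))).congr
      (fun τ hτ => hrep τ hτ) (hrep t ht)
  -- value of G t : integration by parts and the PDE
  have hIvxx : IntervalIntegrable (fun s => vxx t s * Real.sin (k * s)) volume 0 l :=
    (((hvxx_slice t ht).mul hsinc.continuousOn).mono (by rw [uIcc_of_le hl.le])).intervalIntegrable
  have hIv : IntervalIntegrable (fun s => v t s * Real.sin (k * s)) volume 0 l :=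
    (((hv_slice t ht).mul hsinc.continuousOn).mono (by rw [uIcc_of_le hl.le])).intervalIntegrable
  have hIf : IntervalIntegrable (fun s => f t s * Real.sin (k * s)) volume 0 l :=
    (((hf_slice t ht).mul hsinc.continuousOn).mono (by rw [uIcc_of_le hl.le])).intervalIntegrable
  -- integration by parts
  have hibp : (∫ s in (0 : ℝ)..l, vxx t s * Real.sin (k * s))
      = -(k ^ 2) * ∫ s in (0 : ℝ)..l, v t s * Real.sin (k * s) := by
    set dvx : ℝ → ℝ := derivWithin (v t) (Icc 0 l) with hdvx
    set P : ℝ → ℝ := fun s => dvx s * Real.sin (k * s) - k * v t s * Real.cos (k * s) with hP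
    have hdvxc : ContinuousOn dvx (Icc 0 l) := fun s hs => (hvx2 t ht s hs).continuousWithinAt
    have hPcont : ContinuousOn P (Icc 0 l) :=
      (hdvxc.mul hsinc.continuousOn).sub
        (((continuousOn_const.mul (hv_slice t ht))).mul hcosc.continuousOn)
    have hPderiv : ∀ s ∈ Ioo (0 : ℝ) l, HasDerivWithinAt P
        (vxx t s * Real.sin (k * s) + k ^ 2 * (v t s * Real.sin (k * s))) (Ioi s) s := by
      intro s hs
      have hmem : Icc (0 : ℝ) l ∈ 𝓝[Ioi s] s :=
        nhdsWithin_le_nhds (Icc_mem_nhds hs.1 hs.2)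
      have h1 : HasDerivWithinAt (v t) (dvx s) (Ioi s) s :=
        ((hvx1 t ht s (Ioo_subset_Icc_self hs)).hasDerivWithinAt).mono_of_mem_nhdsWithin hmem
      have h2 : HasDerivWithinAt dvx (vxx t s) (Ioi s) s :=
        ((hvx2 t ht s (Ioo_subset_Icc_self hs)).hasDerivWithinAt).mono_of_mem_nhdsWithin hmem
      have hkx : HasDerivAt (fun x : ℝ => k * x) k s := by
        simpa using (hasDerivAt_id s).const_mul k
      have hsin : HasDerivAt (fun x : ℝ => Real.sin (k * x)) (Real.cos (k * s) * k) s :=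
        (Real.hasDerivAt_sin (k * s)).comp s hkx
      have hcos : HasDerivAt (fun x : ℝ => Real.cos (k * x)) (-Real.sin (k * s) * k) s :=
        (Real.hasDerivAt_cos (k * s)).comp s hkx
      have term1 := h2.mul hsin.hasDerivWithinAt
      have term2 := (h1.const_mul k).mul hcos.hasDerivWithinAt
      have := term1.sub term2
      refine this.congr_deriv ?_
      ring
    have hPint : IntervalIntegrable
        (fun s => vxx t s * Real.sin (k * s) + k ^ 2 * (v t s * Real.sin (k * s)))
        volume 0 l := hIvxx.add (hIv.const_mul _)
    have hFTC2 := intervalIntegral.integral_eq_sub_of_hasDeriv_right_of_le hl.le hPcont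
      hPderiv hPint
    have hkl : k * l = (j : ℝ) * π := by rw [hk]; field_simp
    have hPl : P l = 0 := by
      have h1 : Real.sin (k * l) = 0 := by rw [hkl]; exact Real.sin_nat_mul_pi j
      simp [hP, h1, hbdl t ht]
    have hP0 : P 0 = 0 := by
      simp only [hP, mul_zero, Real.sin_zero, hbd0 t ht, zero_mul]
      ring
    rw [hPl, hP0, sub_zero] at hFTC2
    rw [intervalIntegral.integral_add hIvxx (hIv.const_mul _),
      intervalIntegral.integral_const_mul] at hFTC2
    linarith [hFTC2]
  -- compute G t
  have hGt : G t = (Φ - k ^ 2) * (∫ s in (0 : ℝ)..l, v t s * Real.sin (k * s))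
      + ∫ s in (0 : ℝ)..l, f t s * Real.sin (k * s) := by
    have hcongr : G t = ∫ s in (0 : ℝ)..l,
        (vxx t s * Real.sin (k * s) + Φ * (v t s * Real.sin (k * s))
          + f t s * Real.sin (k * s)) := by
      refine intervalIntegral.integral_congr (fun s hs => ?_)
      have hs' : s ∈ Icc 0 l := by rwa [uIcc_of_le hl.le] at hs
      have := hPDE t ht s hs'
      simp only [hgdef, hdtvdef, hvxxdef] at *
      rw [this]; ring
    rw [hcongr, intervalIntegral.integral_add (hIvxx.add (hIv.const_mul Φ)) hIf,
      intervalIntegral.integral_add hIvxx (hIv.const_mul Φ),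
      intervalIntegral.integral_const_mul, hibp]
    ring
  -- conclusion
  have hfinal := hHd.const_mul (2 / l)
  refine hfinal.congr_deriv ?_
  rw [hGt]
  ring
end

section
/- Let l > 0, Φ ∈ ℝ, and let δ₀, δ₁ : [0,∞) → ℝ be continuously differentiable. Define f(t,x) := (Φ δ₀(t) − δ₀′(t)) + (x/l)(Φ(δ₁(t) − δ₀(t)) + δ₀′(t) − δ₁′(t)), the Fourier sine coefficients f_j(t) := (2/l)∫₀^l f(t,s) sin(πjs/l) ds for integers j ≥ 1, and ν(t) := |Φ|(|δ₀(t)| + |δ₁(t)|) + |δ₀′(t)| + |δ₁′(t)|. Then |f_j(t)| ≤ 6 ν(t)/(π j) for every j ≥ 1 and every t ≥ 0. -/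
open Real Set MeasureTheory intervalIntegral

lemma sin_integral_aux (a l : ℝ) (ha : a ≠ 0) :
    ∫ s in (0:ℝ)..l, Real.sin (a * s) = (1 - Real.cos (a * l)) / a := by
  have h : ∀ s ∈ Set.uIcc (0:ℝ) l, HasDerivAt (fun s => -Real.cos (a * s) / a)
      (Real.sin (a * s)) s := by
    intro s _
    have h1 : HasDerivAt (fun s => a * s) a s := by
      simpa using (hasDerivAt_id s).const_mul a
    have h2 := (Real.hasDerivAt_cos (a * s)).comp s h1
    have h3 := ((h2.neg).div_const a)
    exact h3.congr_deriv (by rw [div_eq_iff ha]; ring)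
  have := intervalIntegral.integral_eq_sub_of_hasDerivAt h
    (by apply Continuous.intervalIntegrable; continuity)
  rw [this]
  simp
  ring

lemma mul_sin_integral_aux (a l : ℝ) (ha : a ≠ 0) :
    ∫ s in (0:ℝ)..l, s * Real.sin (a * s)
      = Real.sin (a * l) / a ^ 2 - l * Real.cos (a * l) / a := by
  have h : ∀ s ∈ Set.uIcc (0:ℝ) l,
      HasDerivAt (fun s => Real.sin (a * s) / a ^ 2 - s * Real.cos (a * s) / a)
      (s * Real.sin (a * s)) s := by
    intro s _
    have h1 : HasDerivAt (fun s => a * s) a s := by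
      simpa using (hasDerivAt_id s).const_mul a
    have hsin := (Real.hasDerivAt_sin (a * s)).comp s h1
    have hcos := (Real.hasDerivAt_cos (a * s)).comp s h1
    have hmul : HasDerivAt (fun s => s * Real.cos (a * s))
        (1 * Real.cos (a * s) + s * (-Real.sin (a * s) * a)) s :=
      (hasDerivAt_id s).mul hcos
    have h3 := (hsin.div_const (a ^ 2)).sub (hmul.div_const a)
    exact h3.congr_deriv (by field_simp; ring)
  have := intervalIntegral.integral_eq_sub_of_hasDerivAt h
    (by apply Continuous.intervalIntegrable; continuity)
  rw [this]
  simp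

/-- Bound on the Fourier sine coefficients of
`f(t,x) = (Φδ₀ − δ₀′) + (x/l)(Φ(δ₁ − δ₀) + δ₀′ − δ₁′)`:
`|f_j(t)| ≤ 6 ν(t) / (π j)` where
`ν(t) = |Φ|(|δ₀| + |δ₁|) + |δ₀′| + |δ₁′|`. -/
theorem fourier_coefficient_bound (l Φ : ℝ) (hl : 0 < l) (δ0 δ1 : ℝ → ℝ)
    (hδ0 : ContDiffOn ℝ 1 δ0 (Ici 0)) (hδ1 : ContDiffOn ℝ 1 δ1 (Ici 0)) :
    ∀ j : ℕ, 1 ≤ j → ∀ t ∈ Ici (0 : ℝ),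
      |(2 / l) * ∫ s in (0 : ℝ)..l,
          ((Φ * δ0 t - derivWithin δ0 (Ici 0) t)
            + (s / l) * (Φ * (δ1 t - δ0 t)
                + derivWithin δ0 (Ici 0) t - derivWithin δ1 (Ici 0) t))
          * Real.sin (π * (j : ℝ) * s / l)|
        ≤ 6 * (|Φ| * (|δ0 t| + |δ1 t|)
              + |derivWithin δ0 (Ici 0) t| + |derivWithin δ1 (Ici 0) t|)
            / (π * (j : ℝ)) := by
  intro j hj t ht
  set A := Φ * δ0 t - derivWithin δ0 (Ici 0) t with hA
  set B := Φ * (δ1 t - δ0 t) + derivWithin δ0 (Ici 0) t - derivWithin δ1 (Ici 0) t with hB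
  have hπ : 0 < π := Real.pi_pos
  have hj' : (1:ℝ) ≤ (j:ℝ) := by exact_mod_cast hj
  have hjpos : (0:ℝ) < (j:ℝ) := by linarith
  set a := π * (j:ℝ) / l with ha
  have hapos : 0 < a := by positivity
  have hane : a ≠ 0 := ne_of_gt hapos
  have hal : a * l = π * (j:ℝ) := by rw [ha, div_mul_cancel₀ _ hl.ne']
  have hsin0 : Real.sin (a * l) = 0 := by
    rw [hal, mul_comm]; exact Real.sin_nat_mul_pi j
  have harg : ∀ s : ℝ, π * (j:ℝ) * s / l = a * s := by
    intro s; rw [ha]; ring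
  -- rewrite integrand
  have hint : (∫ s in (0 : ℝ)..l,
      (A + (s / l) * B) * Real.sin (π * (j : ℝ) * s / l))
      = A * ((1 - Real.cos (a * l)) / a)
        + (B / l) * (Real.sin (a * l) / a ^ 2 - l * Real.cos (a * l) / a) := by
    have : ∀ s : ℝ, (A + (s / l) * B) * Real.sin (π * (j : ℝ) * s / l)
        = A * Real.sin (a * s) + (B / l) * (s * Real.sin (a * s)) := by
      intro s; rw [harg s]; field_simp
    rw [intervalIntegral.integral_congr (fun s _ => this s)]
    have csin : Continuous fun s : ℝ => Real.sin (a * s) :=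
      Real.continuous_sin.comp (continuous_const.mul continuous_id)
    have i1 : IntervalIntegrable (fun s => A * Real.sin (a * s)) volume 0 l :=
      (continuous_const.mul csin).intervalIntegrable 0 l
    have i2 : IntervalIntegrable (fun s => (B / l) * (s * Real.sin (a * s))) volume 0 l :=
      (continuous_const.mul (continuous_id.mul csin)).intervalIntegrable 0 l
    rw [intervalIntegral.integral_add i1 i2,
      intervalIntegral.integral_const_mul, intervalIntegral.integral_const_mul,
      sin_integral_aux a l hane, mul_sin_integral_aux a l hane]
  rw [hint, hsin0]
  set c := Real.cos (a * l) with hc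
  have hc1 : |c| ≤ 1 := Real.abs_cos_le_one _
  set ν := |Φ| * (|δ0 t| + |δ1 t|) + |derivWithin δ0 (Ici 0) t| + |derivWithin δ1 (Ici 0) t| with hν
  have hAb : |A| ≤ ν := by
    rw [hA, hν]
    have h1 : |Φ * δ0 t - derivWithin δ0 (Ici 0) t| ≤ |Φ * δ0 t| + |derivWithin δ0 (Ici 0) t| :=
      abs_sub _ _
    rw [abs_mul] at h1
    have := abs_nonneg (δ1 t)
    have := abs_nonneg (derivWithin δ1 (Ici 0) t)
    have := abs_nonneg Φ
    nlinarith
  have hBb : |B| ≤ ν := by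
    rw [hB, hν]
    calc |Φ * (δ1 t - δ0 t) + derivWithin δ0 (Ici 0) t - derivWithin δ1 (Ici 0) t|
        ≤ |Φ * (δ1 t - δ0 t) + derivWithin δ0 (Ici 0) t| + |derivWithin δ1 (Ici 0) t| :=
          abs_sub _ _
      _ ≤ |Φ * (δ1 t - δ0 t)| + |derivWithin δ0 (Ici 0) t| + |derivWithin δ1 (Ici 0) t| := by
          have := abs_add_le (Φ * (δ1 t - δ0 t)) (derivWithin δ0 (Ici 0) t); linarith
      _ ≤ |Φ| * (|δ0 t| + |δ1 t|) + |derivWithin δ0 (Ici 0) t| + |derivWithin δ1 (Ici 0) t| := by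
          rw [abs_mul]
          have h2 : |δ1 t - δ0 t| ≤ |δ1 t| + |δ0 t| := abs_sub _ _
          have := abs_nonneg Φ
          nlinarith
  have hνnn : 0 ≤ ν := le_trans (abs_nonneg A) hAb
  -- the value simplifies
  have hval : A * ((1 - c) / a) + B / l * (0 / a ^ 2 - l * c / a) = (A * (1 - c) - B * c) / a := by
    field_simp
    ring
  rw [hval]
  have hbound : |2 / l * ((A * (1 - c) - B * c) / a)| = 2 / (l * a) * |A * (1 - c) - B * c| := by
    rw [abs_mul, abs_div, abs_div, abs_of_pos hapos, abs_two, abs_of_pos hl]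
    field_simp
  rw [hbound]
  have h1c : |1 - c| ≤ 2 := by
    rw [abs_le] at hc1 ⊢; constructor <;> linarith [hc1.1, hc1.2]
  have hnum : |A * (1 - c) - B * c| ≤ 3 * ν := by
    calc |A * (1 - c) - B * c| ≤ |A * (1 - c)| + |B * c| := abs_sub _ _
      _ = |A| * |1 - c| + |B| * |c| := by rw [abs_mul, abs_mul]
      _ ≤ ν * 2 + ν * 1 :=
          add_le_add (mul_le_mul hAb h1c (abs_nonneg _) hνnn)
            (mul_le_mul hBb hc1 (abs_nonneg _) hνnn)
      _ = 3 * ν := by ring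
  have hla : l * a = π * (j:ℝ) := by rw [mul_comm]; exact hal
  calc 2 / (l * a) * |A * (1 - c) - B * c| ≤ 2 / (l * a) * (3 * ν) := by
        gcongr
      _ = 6 * ν / (π * (j:ℝ)) := by rw [hla]; ring
end

section
/- Let l > 0, Φ = (π/l)², and let μ̃₀, μ̃₁ ∈ ℝ with μ̃₀ + μ̃₁ ≠ 0. Set U₀(x) := μ̃₀(l−x)/l + μ̃₁ x/l. Let φ₀ : [0,l] → ℝ be continuous and let φ : [0,∞) × [0,l] → ℝ be continuous, continuously differentiable in t, twice continuously differentiable in x (with jointly continuous derivatives), satisfying ∂_t φ(t,x) = ∂_x² φ(t,x) + Φ φ(t,x), φ(0,x) = φ₀(x), φ(t,0) = μ̃₀, φ(t,l) = μ̃₁. Then for all t ≥ 0, (2/l)∫₀^l (φ(t,s) − U₀(s)) sin(πs/l) ds = v₁⁰ + f₁ t, where v₁⁰ := (2/l)∫₀^l (φ₀(s) − U₀(s)) sin(πs/l) ds and f₁ := 2π(μ̃₀ + μ̃₁)/l² ≠ 0. Consequently sup_{x∈[0,l]} |φ(t,x)| → ∞ as t → ∞, i.e. the solution is not stabilized at infinity.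 -/
open Real Filter Set MeasureTheory intervalIntegral
open Topology

lemma ibp_resonance (l : ℝ) (hl : 0 < l) (g : ℝ → ℝ)
    (hg1 : ∀ x ∈ Icc 0 l, DifferentiableWithinAt ℝ g (Icc 0 l) x)
    (hg2 : ∀ x ∈ Icc 0 l, DifferentiableWithinAt ℝ (derivWithin g (Icc 0 l)) (Icc 0 l) x)
    (hg2c : ContinuousOn (derivWithin (derivWithin g (Icc 0 l)) (Icc 0 l)) (Icc 0 l)) :
    ∫ s in (0:ℝ)..l,
      (derivWithin (derivWithin g (Icc 0 l)) (Icc 0 l) s + (π / l) ^ 2 * g s)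
        * Real.sin (π * s / l)
      = (π / l) * (g 0 + g l) := by
  set G1 := derivWithin g (Icc 0 l) with hG1
  set G2 := derivWithin G1 (Icc 0 l) with hG2
  have hgc : ContinuousOn g (Icc 0 l) := fun x hx => (hg1 x hx).continuousWithinAt
  have hG1c : ContinuousOn G1 (Icc 0 l) := fun x hx => (hg2 x hx).continuousWithinAt
  have hlin : Continuous fun x : ℝ => π * x / l :=
    (continuous_const.mul continuous_id).div_const l
  have hsinc : Continuous fun x : ℝ => Real.sin (π * x / l) := Real.continuous_sin.comp hlin
  have hcosc : Continuous fun x : ℝ => Real.cos (π * x / l) := Real.continuous_cos.comp hlin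
  set H : ℝ → ℝ := fun x => G1 x * Real.sin (π * x / l) - π / l * (g x * Real.cos (π * x / l))
    with hH
  have hHc : ContinuousOn H (Icc 0 l) :=
    (hG1c.mul hsinc.continuousOn).sub
      (continuousOn_const.mul (hgc.mul hcosc.continuousOn))
  have hderiv : ∀ x ∈ Ioo (0:ℝ) l,
      HasDerivWithinAt H ((G2 x + (π / l) ^ 2 * g x) * Real.sin (π * x / l)) (Ioi x) x := by
    intro x hx
    have hmem : Icc (0:ℝ) l ∈ 𝓝 x := Icc_mem_nhds hx.1 hx.2
    have hxI : x ∈ Icc (0:ℝ) l := Ioo_subset_Icc_self hx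
    have hgd : HasDerivAt g (G1 x) x := by
      have h1 := ((hg1 x hxI).differentiableAt hmem).hasDerivAt
      rwa [hG1, derivWithin_of_mem_nhds hmem]
    have hG1d : HasDerivAt G1 (G2 x) x := by
      have h1 := ((hg2 x hxI).differentiableAt hmem).hasDerivAt
      rwa [hG2, derivWithin_of_mem_nhds hmem]
    have hu : HasDerivAt (fun y : ℝ => π * y / l) (π / l) x := by
      simpa using ((hasDerivAt_id x).const_mul π).div_const l
    have hs : HasDerivAt (fun y : ℝ => Real.sin (π * y / l))
        (Real.cos (π * x / l) * (π / l)) x := (Real.hasDerivAt_sin _).comp x hu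
    have hc : HasDerivAt (fun y : ℝ => Real.cos (π * y / l))
        (-Real.sin (π * x / l) * (π / l)) x := (Real.hasDerivAt_cos _).comp x hu
    have hHd := (hG1d.mul hs).sub (((hgd.mul hc)).const_mul (π / l))
    have : G2 x * Real.sin (π * x / l) + G1 x * (Real.cos (π * x / l) * (π / l))
        - π / l * (G1 x * Real.cos (π * x / l) + g x * (-Real.sin (π * x / l) * (π / l)))
        = (G2 x + (π / l) ^ 2 * g x) * Real.sin (π * x / l) := by ring
    exact (this ▸ hHd).hasDerivWithinAt
  have hint : IntervalIntegrable
      (fun s => (G2 s + (π / l) ^ 2 * g s) * Real.sin (π * s / l)) volume 0 l := by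
    apply ContinuousOn.intervalIntegrable
    rw [uIcc_of_le hl.le]
    exact ((hg2c.add (continuousOn_const.mul hgc)).mul hsinc.continuousOn)
  have := intervalIntegral.integral_eq_sub_of_hasDeriv_right_of_le hl.le hHc hderiv hint
  rw [this]
  have hπl : π * l / l = π := by field_simp
  have h0 : π * (0:ℝ) / l = 0 := by ring
  simp only [hH, hπl, h0, Real.sin_pi, Real.cos_pi, Real.sin_zero, Real.cos_zero]
  ring

set_option maxHeartbeats 1000000

/-- Resonance case `Φ = (π/l)²` with stationary boundary values `μ̃₀, μ̃₁` such that
`μ̃₀ + μ̃₁ ≠ 0`: for a classical solution `φ` of `∂ₜφ = ∂ₓ²φ + Φφ` with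
`φ(t,0) = μ̃₀`, `φ(t,l) = μ̃₁`, the first Fourier sine coefficient of `φ(t,·) − U₀`
grows linearly, `(2/l)∫₀ˡ (φ(t,s) − U₀(s)) sin(πs/l) ds = v₁⁰ + f₁ t` with
`f₁ = 2π(μ̃₀+μ̃₁)/l² ≠ 0`; consequently `sup_{[0,l]} |φ(t,·)| → ∞`, i.e. the solution
is not stabilized at infinity. -/
theorem prf_warped_product_resonance_divergence (l Φ : ℝ) (hl : 0 < l)
    (hΦ : Φ = (π / l) ^ 2)
    (tμ0 tμ1 : ℝ) (hsum : tμ0 + tμ1 ≠ 0)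
    (φ0 : ℝ → ℝ) (hφ0 : ContinuousOn φ0 (Icc 0 l))
    (φ : ℝ → ℝ → ℝ)
    (hφcont : ContinuousOn (fun p : ℝ × ℝ => φ p.1 p.2) (Ici 0 ×ˢ Icc 0 l))
    (hφt : ∀ t ∈ Ici (0 : ℝ), ∀ x ∈ Icc 0 l,
      DifferentiableWithinAt ℝ (fun s => φ s x) (Ici 0) t)
    (hφx1 : ∀ t ∈ Ici (0 : ℝ), ∀ x ∈ Icc 0 l,
      DifferentiableWithinAt ℝ (φ t) (Icc 0 l) x)
    (hφx2 : ∀ t ∈ Ici (0 : ℝ), ∀ x ∈ Icc 0 l,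
      DifferentiableWithinAt ℝ (derivWithin (φ t) (Icc 0 l)) (Icc 0 l) x)
    (hφtcont : ContinuousOn
      (fun p : ℝ × ℝ => derivWithin (fun s => φ s p.2) (Ici 0) p.1) (Ici 0 ×ˢ Icc 0 l))
    (hφxcont : ContinuousOn
      (fun p : ℝ × ℝ => derivWithin (derivWithin (φ p.1) (Icc 0 l)) (Icc 0 l) p.2)
      (Ici 0 ×ˢ Icc 0 l))
    (hPDE : ∀ t ∈ Ici (0 : ℝ), ∀ x ∈ Icc 0 l,
      derivWithin (fun s => φ s x) (Ici 0) t
        = derivWithin (derivWithin (φ t) (Icc 0 l)) (Icc 0 l) x + Φ * φ t x)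
    (hinit : ∀ x ∈ Icc 0 l, φ 0 x = φ0 x)
    (hbd0 : ∀ t ∈ Ici (0 : ℝ), φ t 0 = tμ0)
    (hbdl : ∀ t ∈ Ici (0 : ℝ), φ t l = tμ1) :
    (∀ t ∈ Ici (0 : ℝ),
      (2 / l) * ∫ s in (0 : ℝ)..l,
          (φ t s - (tμ0 * ((l - s) / l) + tμ1 * (s / l))) * Real.sin (π * s / l)
        = ((2 / l) * ∫ s in (0 : ℝ)..l,
            (φ0 s - (tμ0 * ((l - s) / l) + tμ1 * (s / l))) * Real.sin (π * s / l))
          + (2 * π * (tμ0 + tμ1) / l ^ 2) * t) ∧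
    (2 * π * (tμ0 + tμ1) / l ^ 2 ≠ 0) ∧
    Tendsto (fun t => sSup ((fun x => |φ t x|) '' Icc 0 l)) atTop atTop := by
  have hl0 : l ≠ 0 := ne_of_gt hl
  set U : ℝ → ℝ := fun s => tμ0 * ((l - s) / l) + tμ1 * (s / l) with hU
  set f1 : ℝ := 2 * π * (tμ0 + tμ1) / l ^ 2 with hf1
  have hlinc : Continuous fun x : ℝ => π * x / l :=
    (continuous_const.mul continuous_id).div_const l
  have hsinc : Continuous fun x : ℝ => Real.sin (π * x / l) := Real.continuous_sin.comp hlinc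
  have hUc : Continuous U :=
    (continuous_const.mul ((continuous_const.sub continuous_id).div_const l)).add
      (continuous_const.mul (continuous_id.div_const l))
  have hslice : ∀ t ∈ Ici (0:ℝ), ContinuousOn (fun x => φ t x) (Icc 0 l) := by
    intro t ht
    exact hφcont.comp (Continuous.continuousOn (continuous_const.prodMk continuous_id))
      (fun x hx => ⟨ht, hx⟩)
  have htslice : ∀ x ∈ Icc (0:ℝ) l, ContinuousOn (fun t => φ t x) (Ici 0) := by
    intro x hx
    exact hφcont.comp (Continuous.continuousOn (continuous_id.prodMk continuous_const))
      (fun t ht => ⟨ht, hx⟩)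
  have hDcont : ∀ x ∈ Icc (0:ℝ) l,
      ContinuousOn (fun t => derivWithin (fun s => φ s x) (Ici 0) t) (Ici 0) := by
    intro x hx
    exact hφtcont.comp (Continuous.continuousOn (continuous_id.prodMk continuous_const))
      (fun t ht => ⟨ht, hx⟩)
  set c : ℝ := π / l * (tμ0 + tμ1) with hc
  -- inner spatial integral of the time-derivative
  have hinner : ∀ t ∈ Ici (0:ℝ),
      ∫ x in (0:ℝ)..l,
        derivWithin (fun s => φ s x) (Ici 0) t * Real.sin (π * x / l) = c := by
    intro t ht
    have hcongr : EqOn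
        (fun x => derivWithin (fun s => φ s x) (Ici 0) t * Real.sin (π * x / l))
        (fun x => (derivWithin (derivWithin (φ t) (Icc 0 l)) (Icc 0 l) x
          + (π / l) ^ 2 * φ t x) * Real.sin (π * x / l)) (uIcc 0 l) := by
      rw [uIcc_of_le hl.le]
      intro x hx
      simp only
      rw [hPDE t ht x hx, hΦ]
    rw [intervalIntegral.integral_congr hcongr]
    have h2c : ContinuousOn (derivWithin (derivWithin (φ t) (Icc 0 l)) (Icc 0 l)) (Icc 0 l) :=
      hφxcont.comp (Continuous.continuousOn (continuous_const.prodMk continuous_id))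
        (fun x hx => ⟨ht, hx⟩)
    rw [ibp_resonance l hl (φ t) (hφx1 t ht) (hφx2 t ht) h2c, hbd0 t ht, hbdl t ht, hc]
  set F : ℝ → ℝ := fun t => ∫ x in (0:ℝ)..l, φ t x * Real.sin (π * x / l) with hF
  have hFint : ∀ t ∈ Ici (0:ℝ),
      IntervalIntegrable (fun x => φ t x * Real.sin (π * x / l)) volume 0 l := by
    intro t ht
    apply ContinuousOn.intervalIntegrable
    rw [uIcc_of_le hl.le]
    exact (hslice t ht).mul hsinc.continuousOn
  have hFlin : ∀ T ∈ Ici (0:ℝ), F T = F 0 + c * T := by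
    intro T hT
    have key1 : ∀ x ∈ Icc (0:ℝ) l,
        φ T x - φ 0 x = ∫ t in (0:ℝ)..T, derivWithin (fun s => φ s x) (Ici 0) t := by
      intro x hx
      symm
      apply intervalIntegral.integral_eq_sub_of_hasDeriv_right_of_le hT
      · exact (htslice x hx).mono Icc_subset_Ici_self
      · intro t ht
        have hmem : Ici (0:ℝ) ∈ 𝓝 t := Ici_mem_nhds ht.1
        have h1 := (((hφt t (le_of_lt ht.1) x hx)).differentiableAt hmem).hasDerivAt
        rw [derivWithin_of_mem_nhds hmem]
        exact h1.hasDerivWithinAt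
      · apply ContinuousOn.intervalIntegrable
        rw [uIcc_of_le hT]
        exact (hDcont x hx).mono Icc_subset_Ici_self
    have step1 : F T - F 0
        = ∫ x in (0:ℝ)..l, (φ T x - φ 0 x) * Real.sin (π * x / l) := by
      rw [hF]
      rw [← intervalIntegral.integral_sub (hFint T hT) (hFint 0 self_mem_Ici)]
      apply intervalIntegral.integral_congr
      intro x _
      simp only
      ring
    have step2 : ∫ x in (0:ℝ)..l, (φ T x - φ 0 x) * Real.sin (π * x / l)
        = ∫ x in (0:ℝ)..l, ∫ t in (0:ℝ)..T,
            derivWithin (fun s => φ s x) (Ici 0) t * Real.sin (π * x / l) := by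
      apply intervalIntegral.integral_congr
      rw [uIcc_of_le hl.le]
      intro x hx
      simp only
      rw [key1 x hx]
      exact (intervalIntegral.integral_mul_const _ _).symm
    have hcontu : ContinuousOn
        (Function.uncurry fun x t =>
          derivWithin (fun s => φ s x) (Ici 0) t * Real.sin (π * x / l))
        (Icc 0 l ×ˢ Icc 0 T) := by
      have h1 : ContinuousOn
          (fun p : ℝ × ℝ => derivWithin (fun s => φ s p.1) (Ici 0) p.2)
          (Icc 0 l ×ˢ Icc 0 T) := by
        apply hφtcont.comp continuous_swap.continuousOn
        rintro ⟨x, t⟩ ⟨hx, ht⟩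
        exact ⟨ht.1, hx⟩
      exact h1.mul ((hsinc.comp continuous_fst).continuousOn)
    have hintg : Integrable
        (Function.uncurry fun x t =>
          derivWithin (fun s => φ s x) (Ici 0) t * Real.sin (π * x / l))
        ((volume.restrict (Ioc 0 l)).prod (volume.restrict (Ioc 0 T))) := by
      rw [Measure.prod_restrict, ← Measure.volume_eq_prod]
      exact (hcontu.integrableOn_compact (isCompact_Icc.prod isCompact_Icc)).mono_set
        (prod_mono Ioc_subset_Icc_self Ioc_subset_Icc_self)
    have step3 : ∫ x in (0:ℝ)..l, ∫ t in (0:ℝ)..T,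
            derivWithin (fun s => φ s x) (Ici 0) t * Real.sin (π * x / l)
        = ∫ t in (0:ℝ)..T, ∫ x in (0:ℝ)..l,
            derivWithin (fun s => φ s x) (Ici 0) t * Real.sin (π * x / l) := by
      simp only [intervalIntegral.integral_of_le hT, intervalIntegral.integral_of_le hl.le]
      exact MeasureTheory.integral_integral_swap hintg
    have step4 : ∫ t in (0:ℝ)..T, ∫ x in (0:ℝ)..l,
            derivWithin (fun s => φ s x) (Ici 0) t * Real.sin (π * x / l)
        = c * T := by
      have : EqOn (fun t => ∫ x in (0:ℝ)..l,
          derivWithin (fun s => φ s x) (Ici 0) t * Real.sin (π * x / l))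
          (fun _ => c) (uIcc 0 T) := by
        rw [uIcc_of_le hT]
        intro t ht
        exact hinner t ht.1
      rw [intervalIntegral.integral_congr this, intervalIntegral.integral_const]
      simp [mul_comm]
    have := step1.trans (step2.trans (step3.trans step4))
    linarith
  have hsplit : ∀ t ∈ Ici (0:ℝ),
      ∫ s in (0:ℝ)..l, (φ t s - U s) * Real.sin (π * s / l)
        = F t - ∫ s in (0:ℝ)..l, U s * Real.sin (π * s / l) := by
    intro t ht
    rw [hF]
    rw [← intervalIntegral.integral_sub (g := fun x => U x * Real.sin (π * x / l)) (hFint t ht)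
      ((hUc.mul hsinc).intervalIntegrable 0 l)]
    apply intervalIntegral.integral_congr
    intro x _
    simp only
    ring
  have hinit' : ∫ s in (0:ℝ)..l, (φ0 s - U s) * Real.sin (π * s / l)
      = F 0 - ∫ s in (0:ℝ)..l, U s * Real.sin (π * s / l) := by
    rw [← hsplit 0 self_mem_Ici]
    apply intervalIntegral.integral_congr
    rw [uIcc_of_le hl.le]
    intro x hx
    simp only
    rw [hinit x hx]
  have hpart1 : ∀ t ∈ Ici (0:ℝ),
      (2 / l) * ∫ s in (0 : ℝ)..l, (φ t s - U s) * Real.sin (π * s / l)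
        = ((2 / l) * ∫ s in (0 : ℝ)..l, (φ0 s - U s) * Real.sin (π * s / l)) + f1 * t := by
    intro t ht
    rw [hsplit t ht, hinit', hFlin t ht, hf1, hc]
    field_simp
    ring
  have hf1ne : f1 ≠ 0 := by
    rw [hf1]
    exact div_ne_zero (mul_ne_zero (mul_ne_zero two_ne_zero Real.pi_ne_zero) hsum)
      (pow_ne_zero 2 hl0)
  refine ⟨hpart1, hf1ne, ?_⟩
  -- divergence of the sup
  set v : ℝ := (2 / l) * ∫ s in (0 : ℝ)..l, (φ0 s - U s) * Real.sin (π * s / l) with hv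
  set K : ℝ := |tμ0| + |tμ1| with hK
  have hM : ∀ t : ℝ, 0 ≤ t →
      |f1| / 2 * t + (-(|v| / 2 + K)) ≤ sSup ((fun x => |φ t x|) '' Icc 0 l) := by
    intro t ht
    have hbdd : BddAbove ((fun x => |φ t x|) '' Icc 0 l) :=
      (isCompact_Icc.image_of_continuousOn ((hslice t ht).abs)).bddAbove
    set M := sSup ((fun x => |φ t x|) '' Icc 0 l) with hM
    have hMle : ∀ s ∈ Icc (0:ℝ) l, |φ t s| ≤ M := fun s hs =>
      le_csSup hbdd (mem_image_of_mem _ hs)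
    have hbound : |∫ s in (0:ℝ)..l, (φ t s - U s) * Real.sin (π * s / l)|
        ≤ (M + K) * |l - 0| := by
      rw [← Real.norm_eq_abs]
      apply intervalIntegral.norm_integral_le_of_norm_le_const
      intro x hx
      have hx' : x ∈ Icc (0:ℝ) l := by
        rw [uIoc_of_le hl.le] at hx
        exact Ioc_subset_Icc_self hx
      have h1 : (0:ℝ) ≤ (l - x) / l := div_nonneg (by linarith [hx'.2]) hl.le
      have h2 : (l - x) / l ≤ 1 := (div_le_one hl).mpr (by linarith [hx'.1])
      have h3 : (0:ℝ) ≤ x / l := div_nonneg hx'.1 hl.le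
      have h4 : x / l ≤ 1 := (div_le_one hl).mpr hx'.2
      have hUb : |U x| ≤ K := by
        calc |U x| ≤ |tμ0 * ((l - x) / l)| + |tμ1 * (x / l)| := abs_add_le _ _
          _ = |tμ0| * ((l - x) / l) + |tμ1| * (x / l) := by
              rw [abs_mul, abs_mul, abs_of_nonneg h1, abs_of_nonneg h3]
          _ ≤ |tμ0| * 1 + |tμ1| * 1 := by gcongr
          _ = K := by rw [hK]; ring
      have hsb : |Real.sin (π * x / l)| ≤ 1 := Real.abs_sin_le_one _
      rw [Real.norm_eq_abs, abs_mul]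
      calc |φ t x - U x| * |Real.sin (π * x / l)| ≤ |φ t x - U x| * 1 := by
            gcongr
        _ = |φ t x - U x| := mul_one _
        _ ≤ |φ t x| + |U x| := abs_sub _ _
        _ ≤ M + K := add_le_add (hMle x hx') hUb
    have h1 := hpart1 t ht
    have e1 : |v + f1 * t| ≤ 2 * (M + K) := by
      have h2 : v + f1 * t
          = (2 / l) * ∫ s in (0:ℝ)..l, (φ t s - U s) * Real.sin (π * s / l) := by
        rw [h1, hv]
      rw [h2, abs_mul]
      have h3 : |2 / l| = 2 / l := abs_of_pos (by positivity)
      rw [h3]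
      have h4 : (0:ℝ) ≤ 2 / l := by positivity
      calc (2 / l) * |∫ s in (0:ℝ)..l, (φ t s - U s) * Real.sin (π * s / l)|
          ≤ (2 / l) * ((M + K) * |l - 0|) := mul_le_mul_of_nonneg_left hbound h4
        _ = 2 * (M + K) := by
            rw [sub_zero, abs_of_pos hl]
            field_simp
    have e2 : |f1| * t - |v| ≤ |v + f1 * t| := by
      have h5 : |f1 * t| - |v| ≤ |v + f1 * t| := by
        have := abs_add_le (v + f1 * t) (-v)
        simp only [add_neg_cancel_comm, abs_neg] at this
        linarith
      rwa [abs_mul, abs_of_nonneg ht] at h5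
    linarith
  have hgt : Tendsto (fun t : ℝ => |f1| / 2 * t + (-(|v| / 2 + K))) atTop atTop := by
    apply tendsto_atTop_add_const_right
    exact Tendsto.const_mul_atTop (by positivity : (0:ℝ) < |f1| / 2) tendsto_id
  refine tendsto_atTop_mono' atTop ?_ hgt
  filter_upwards [eventually_ge_atTop (0:ℝ)] with t ht using hM t ht
end
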